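/- arXiv:1808.09186 — 5 statements merged into one kernel-verified Lean document; each statement's English description precedes it below -/
import Mathlib

section
/- Let ε be a bounded measurable real function on [s₋, s₊] with n₁² ≤ ε(s) ≤ n₂² where 0 < n₁ < n₂, let κ ∈ ℂ with Arg κ ∈ (-π/2, 0), and let y be a nontrivial solution of y'' = -κ² ε y on [s₋, s₊]. Then for each τ ∈ [0, -2 Arg κ], the function G_τ(s) = Re( e^{i(τ - π/2)} conj(y(s)) y'(s) ) is strictly increasing on [s₋, s₊]. -/
set_option maxHeartbeats 1000000

open Set Complex

private lemma aux_unique (sm sp n₁ n₂ : ℝ) (hn₁ : 0 < n₁)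
    (ε : ℝ → ℝ) (hε : ∀ s ∈ Set.Icc sm sp, n₁ ^ 2 ≤ ε s ∧ ε s ≤ n₂ ^ 2)
    (κ : ℂ) (y y' : ℝ → ℂ)
    (hy : ∀ s ∈ Set.Icc sm sp, HasDerivAt y (y' s) s)
    (hy' : ∀ s ∈ Set.Icc sm sp, HasDerivAt y' (-(κ ^ 2 * (ε s : ℂ) * y s)) s)
    (s₀ : ℝ) (hs₀ : s₀ ∈ Set.Ioo sm sp) (h0 : y s₀ = 0) (h0' : y' s₀ = 0) :
    ∀ s ∈ Set.Icc sm sp, y s = 0 := by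
  set εc : ℝ → ℝ := fun t => if t ∈ Set.Icc sm sp then ε t else n₂ ^ 2 with hεc
  have hεcb : ∀ t, |εc t| ≤ n₂ ^ 2 := by
    intro t
    by_cases ht : t ∈ Set.Icc sm sp
    · simp only [hεc, if_pos ht]
      rw [abs_le]
      exact ⟨by nlinarith [(hε t ht).1, sq_nonneg n₁, sq_nonneg n₂], (hε t ht).2⟩
    · simp only [hεc, if_neg ht]
      rw [_root_.abs_of_nonneg (sq_nonneg n₂)]
  set v : ℝ → ℂ × ℂ → ℂ × ℂ := fun t p => (p.2, -(κ ^ 2 * (εc t : ℂ)) * p.1) with hv_def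
  set Kr : ℝ := max 1 (‖κ‖ ^ 2 * n₂ ^ 2) with hKr
  have hKr0 : 0 ≤ Kr := le_trans zero_le_one (le_max_left _ _)
  have hv : ∀ t, LipschitzWith ⟨Kr, hKr0⟩ (v t) := by
    intro t
    apply LipschitzWith.of_dist_le_mul
    intro p q
    rw [Prod.dist_eq, Prod.dist_eq]
    have hd1 : (0:ℝ) ≤ dist p.1 q.1 := dist_nonneg
    have hd2 : (0:ℝ) ≤ dist p.2 q.2 := dist_nonneg
    have hmax1 : dist p.1 q.1 ≤ max (dist p.1 q.1) (dist p.2 q.2) := le_max_left _ _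
    have hmax2 : dist p.2 q.2 ≤ max (dist p.1 q.1) (dist p.2 q.2) := le_max_right _ _
    have hK1 : (1:ℝ) ≤ Kr := le_max_left _ _
    have hK2 : ‖κ‖ ^ 2 * n₂ ^ 2 ≤ Kr := le_max_right _ _
    simp only [hv_def]
    rw [max_le_iff]
    constructor
    · calc dist p.2 q.2 ≤ max (dist p.1 q.1) (dist p.2 q.2) := hmax2
        _ = 1 * max (dist p.1 q.1) (dist p.2 q.2) := (one_mul _).symm
        _ ≤ Kr * max (dist p.1 q.1) (dist p.2 q.2) :=
            mul_le_mul_of_nonneg_right hK1 (le_trans hd2 hmax2)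
    · have heq : dist (-(κ ^ 2 * (εc t : ℂ)) * p.1) (-(κ ^ 2 * (εc t : ℂ)) * q.1)
          = ‖(-(κ ^ 2 * (εc t : ℂ)))‖ * dist p.1 q.1 := by
        rw [dist_eq_norm, dist_eq_norm, ← mul_sub, norm_mul]
      rw [heq]
      have habs : ‖(-(κ ^ 2 * (εc t : ℂ)))‖ ≤ ‖κ‖ ^ 2 * n₂ ^ 2 := by
        rw [norm_neg, norm_mul, norm_pow, Complex.norm_real, Real.norm_eq_abs]
        have := hεcb t
        nlinarith [norm_nonneg κ, abs_nonneg (εc t)]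
      have hmaxnn : (0:ℝ) ≤ max (dist p.1 q.1) (dist p.2 q.2) := le_trans hd1 hmax1
      calc ‖(-(κ ^ 2 * (εc t : ℂ)))‖ * dist p.1 q.1
          ≤ Kr * dist p.1 q.1 := by nlinarith [le_trans habs hK2]
        _ ≤ Kr * max (dist p.1 q.1) (dist p.2 q.2) := by nlinarith
  set f : ℝ → ℂ × ℂ := fun t => (y t, y' t) with hf_def
  have hfcont : ContinuousOn f (Set.Icc sm sp) := by
    intro t ht
    exact ((hy t ht).continuousAt.prodMk (hy' t ht).continuousAt).continuousWithinAt
  have hf' : ∀ t ∈ Set.Ioo sm sp, HasDerivAt f (v t (f t)) t := by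
    intro t ht
    have hmem := Set.Ioo_subset_Icc_self ht
    have h := (hy t hmem).prodMk (hy' t hmem)
    convert h using 1
    simp only [hv_def, hf_def, hεc, if_pos hmem]
    exact Prod.ext rfl (by ring)
  have hg' : ∀ t ∈ Set.Ioo sm sp, HasDerivAt (fun _ : ℝ => ((0:ℂ),(0:ℂ))) (v t ((0:ℂ),(0:ℂ))) t := by
    intro t ht
    rw [show v t ((0:ℂ),(0:ℂ)) = 0 by simp [hv_def]]
    exact hasDerivAt_const t _
  have heq : f s₀ = ((0:ℂ),(0:ℂ)) := Prod.ext h0 h0'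
  have huniq := ODE_solution_unique_of_mem_Icc (v := v) (s := fun _ => (Set.univ : Set (ℂ × ℂ)))
    (fun t _ => (hv t).lipschitzOnWith) hs₀ hfcont hf' (fun _ _ => trivial)
    continuousOn_const hg' (fun _ _ => trivial) heq
  intro s hs
  have := huniq hs
  exact congrArg Prod.fst this

/-- Monotonicity lemma: for `Arg κ ∈ (-π/2, 0)`, `τ ∈ [0, -2 Arg κ]` and a
nontrivial solution `y` of `y'' = -κ² ε y` with `n₁² ≤ ε ≤ n₂²`, the function
`G_τ(s) = Re(e^{i(τ-π/2)} conj(y(s)) y'(s))` is strictly increasing on `[s₋, s₊]`. -/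
theorem stmt1 (sm sp n₁ n₂ : ℝ) (hsm : sm < sp) (hn₁ : 0 < n₁) (hn12 : n₁ < n₂)
    (ε : ℝ → ℝ) (hε : ∀ s ∈ Set.Icc sm sp, n₁ ^ 2 ≤ ε s ∧ ε s ≤ n₂ ^ 2)
    (κ : ℂ) (hκarg : κ.arg ∈ Set.Ioo (-(Real.pi / 2)) 0)
    (τ : ℝ) (hτ : τ ∈ Set.Icc 0 (-2 * κ.arg))
    (y y' : ℝ → ℂ)
    (hy : ∀ s ∈ Set.Icc sm sp, HasDerivAt y (y' s) s)
    (hy' : ∀ s ∈ Set.Icc sm sp, HasDerivAt y' (-(κ ^ 2 * (ε s : ℂ) * y s)) s)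
    (hnt : ∃ s ∈ Set.Icc sm sp, y s ≠ 0) :
    StrictMonoOn (fun s =>
      (Complex.exp (Complex.I * ((τ : ℂ) - (Real.pi : ℂ) / 2)) *
        (starRingEnd ℂ) (y s) * y' s).re) (Set.Icc sm sp) := by
  have hκ0 : κ ≠ 0 := by
    intro h
    rw [h, Complex.arg_zero] at hκarg
    exact lt_irrefl 0 hκarg.2
  set E0 : ℂ := Complex.exp (Complex.I * ((τ : ℂ) - (Real.pi : ℂ) / 2)) with hE0def
  set G : ℝ → ℝ := fun s => (E0 * (starRingEnd ℂ) (y s) * y' s).re with hGdef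
  show StrictMonoOn G (Set.Icc sm sp)
  set A : ℝ := E0.re with hAdef
  set B : ℝ := -((E0 * κ ^ 2).re) with hBdef
  -- trig values
  have hE0eq : E0 = Complex.exp (((τ - Real.pi / 2 : ℝ) : ℂ) * Complex.I) := by
    rw [hE0def]; congr 1; push_cast; ring
  have hE0re : A = Real.sin τ := by
    rw [hAdef, hE0eq, Complex.exp_ofReal_mul_I_re, Real.cos_sub_pi_div_two]
  have hEκ : E0 * κ ^ 2 = ((‖κ‖ ^ 2 : ℝ) : ℂ)
      * Complex.exp (((τ + 2 * κ.arg - Real.pi / 2 : ℝ) : ℂ) * Complex.I) := by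
    conv_lhs => rw [← Complex.norm_mul_exp_arg_mul_I κ]
    rw [mul_pow, sq (Complex.exp _), ← Complex.exp_add, hE0eq]
    rw [show Complex.exp (((τ - Real.pi / 2 : ℝ) : ℂ) * Complex.I) *
        (((‖κ‖ : ℝ) : ℂ) ^ 2 * Complex.exp ((κ.arg : ℂ) * Complex.I + (κ.arg : ℂ) * Complex.I))
        = ((‖κ‖ : ℝ) : ℂ) ^ 2 * (Complex.exp (((τ - Real.pi / 2 : ℝ) : ℂ) * Complex.I) *
          Complex.exp ((κ.arg : ℂ) * Complex.I + (κ.arg : ℂ) * Complex.I)) from by ring]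
    rw [← Complex.exp_add]
    congr 1
    · push_cast; ring
    · push_cast; ring
  have hEκre : (E0 * κ ^ 2).re = ‖κ‖ ^ 2 * Real.sin (τ + 2 * κ.arg) := by
    rw [hEκ, Complex.re_ofReal_mul, Complex.exp_ofReal_mul_I_re,
      show τ + 2 * κ.arg - Real.pi / 2 = (τ + 2 * κ.arg) - Real.pi / 2 from by ring,
      Real.cos_sub_pi_div_two]
  -- sign facts
  have hαlt : -(Real.pi / 2) < κ.arg := hκarg.1
  have hαneg : κ.arg < 0 := hκarg.2
  have hτ0 : 0 ≤ τ := hτ.1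
  have hτ2 : τ ≤ -2 * κ.arg := hτ.2
  have hτπ : τ < Real.pi := by nlinarith [Real.pi_pos]
  have hA : 0 ≤ A := by
    rw [hE0re]
    exact Real.sin_nonneg_of_nonneg_of_le_pi hτ0 hτπ.le
  have hsin2 : Real.sin (τ + 2 * κ.arg) ≤ 0 := by
    have h1 : 0 ≤ Real.sin (-(τ + 2 * κ.arg)) := by
      apply Real.sin_nonneg_of_nonneg_of_le_pi <;> nlinarith [Real.pi_pos]
    rw [Real.sin_neg] at h1
    linarith
  have hB : 0 ≤ B := by
    rw [hBdef, hEκre]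
    nlinarith [sq_nonneg (‖κ‖)]
  have hAB : 0 < A ∨ 0 < B := by
    by_cases hA0 : 0 < A
    · exact Or.inl hA0
    · right
      have hsinτ : Real.sin τ = 0 := by
        rw [hE0re] at hA hA0
        linarith [not_lt.mp hA0]
      have hτeq : τ = 0 := by
        by_contra hne
        have : 0 < τ := lt_of_le_of_ne hτ0 (Ne.symm hne)
        nlinarith [Real.sin_pos_of_pos_of_lt_pi this hτπ]
      have habsκ : 0 < ‖κ‖ := norm_pos_iff.mpr hκ0
      have : Real.sin (τ + 2 * κ.arg) < 0 := by
        rw [hτeq, zero_add]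
        have : 0 < Real.sin (-(2 * κ.arg)) := by
          apply Real.sin_pos_of_pos_of_lt_pi <;> nlinarith [Real.pi_pos]
        rw [Real.sin_neg] at this
        linarith
      rw [hBdef, hEκre]
      have hp := mul_pos (pow_pos habsκ 2) (neg_pos.mpr this)
      nlinarith [hp]
  -- derivative of G
  have key1 : ∀ w : ℂ, (E0 * (starRingEnd ℂ) w * w).re = A * Complex.normSq w := by
    intro w
    rw [mul_assoc, mul_comm ((starRingEnd ℂ) w) w, Complex.mul_conj]
    simp [Complex.mul_re, hAdef]
  have key2 : ∀ (r : ℝ) (w : ℂ), (E0 * (starRingEnd ℂ) w * (-(κ ^ 2 * (r : ℂ) * w))).re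
      = B * (r * Complex.normSq w) := by
    intro r w
    have h1 : E0 * (starRingEnd ℂ) w * (-(κ ^ 2 * (r : ℂ) * w))
        = -((E0 * κ ^ 2) * ((r : ℂ) * (w * (starRingEnd ℂ) w))) := by ring
    rw [h1, Complex.mul_conj, ← Complex.ofReal_mul]
    rw [Complex.neg_re, Complex.mul_re, Complex.ofReal_re, Complex.ofReal_im, hBdef]
    ring
  have hG : ∀ s ∈ Set.Icc sm sp,
      HasDerivAt G (A * Complex.normSq (y' s) + B * (ε s * Complex.normSq (y s))) s := by
    intro s hs
    have hc : HasDerivAt (fun t => (starRingEnd ℂ) (y t)) ((starRingEnd ℂ) (y' s)) s := by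
      simpa only [starRingEnd_apply] using (hy s hs).star
    have hF : HasDerivAt (fun t => E0 * (starRingEnd ℂ) (y t) * y' t)
        (E0 * (starRingEnd ℂ) (y' s) * y' s
          + E0 * (starRingEnd ℂ) (y s) * (-(κ ^ 2 * (ε s : ℂ) * y s))) s := by
      exact (hc.const_mul E0).mul (hy' s hs)
    have hre := Complex.reCLM.hasFDerivAt.comp_hasDerivAt s hF
    have hval : Complex.reCLM (E0 * (starRingEnd ℂ) (y' s) * y' s
        + E0 * (starRingEnd ℂ) (y s) * (-(κ ^ 2 * (ε s : ℂ) * y s)))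
        = A * Complex.normSq (y' s) + B * (ε s * Complex.normSq (y s)) := by
      simp only [Complex.reCLM_apply, Complex.add_re]
      rw [key1, key2]
    rw [hval] at hre
    exact hre
  -- monotonicity
  have hmono : MonotoneOn G (Set.Icc sm sp) := by
    apply monotoneOn_of_deriv_nonneg (convex_Icc sm sp)
    · intro s hs
      exact (hG s hs).continuousAt.continuousWithinAt
    · intro s hs
      rw [interior_Icc] at hs
      exact ((hG s (Set.Ioo_subset_Icc_self hs)).differentiableAt).differentiableWithinAt
    · intro s hs
      rw [interior_Icc] at hs
      have hsI := Set.Ioo_subset_Icc_self hs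
      rw [(hG s hsI).deriv]
      have hε' := (hε s hsI).1
      have hεnn : (0:ℝ) ≤ ε s := by nlinarith
      have h1 := mul_nonneg hA (Complex.normSq_nonneg (y' s))
      have h2 := mul_nonneg hB (mul_nonneg hεnn (Complex.normSq_nonneg (y s)))
      linarith
  intro a ha b hb hab
  rcases (hmono ha hb hab.le).lt_or_eq with h | h
  · exact h
  · exfalso
    have hsubIcc : Set.Icc a b ⊆ Set.Icc sm sp := Set.Icc_subset_Icc ha.1 hb.2
    have hconst : ∀ s ∈ Set.Icc a b, G s = G a := by
      intro s hs
      have h1 := hmono ha (hsubIcc hs) hs.1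
      have h2 := hmono (hsubIcc hs) hb hs.2
      linarith
    set s₀ : ℝ := (a + b) / 2 with hs₀def
    have hs0 : s₀ ∈ Set.Ioo a b := ⟨by simp only [hs₀def]; linarith, by simp only [hs₀def]; linarith⟩
    have hs₀Icc : s₀ ∈ Set.Icc sm sp := hsubIcc (Set.Ioo_subset_Icc_self hs0)
    have hs₀mem : s₀ ∈ Set.Ioo sm sp :=
      ⟨lt_of_le_of_lt ha.1 hs0.1, lt_of_lt_of_le hs0.2 hb.2⟩
    have hder0 : ∀ s ∈ Set.Ioo a b, A * Complex.normSq (y' s) + B * (ε s * Complex.normSq (y s)) = 0 := by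
      intro s hs
      have hev : G =ᶠ[nhds s] fun _ => G a :=
        Filter.eventually_of_mem (isOpen_Ioo.mem_nhds hs)
          (fun x hx => hconst x (Set.Ioo_subset_Icc_self hx))
      have hzero : HasDerivAt G 0 s := (hasDerivAt_const s (G a)).congr_of_eventuallyEq hev
      exact (hG s (hsubIcc (Set.Ioo_subset_Icc_self hs))).unique hzero
    have hterm : ∀ s ∈ Set.Ioo a b,
        A * Complex.normSq (y' s) = 0 ∧ B * (ε s * Complex.normSq (y s)) = 0 := by
      intro s hs
      have hε' := (hε s (hsubIcc (Set.Ioo_subset_Icc_self hs))).1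
      have hεpos : (0:ℝ) ≤ ε s := by nlinarith
      have h1 : 0 ≤ A * Complex.normSq (y' s) := mul_nonneg hA (Complex.normSq_nonneg _)
      have h2 : 0 ≤ B * (ε s * Complex.normSq (y s)) :=
        mul_nonneg hB (mul_nonneg hεpos (Complex.normSq_nonneg _))
      constructor <;> linarith [hder0 s hs]
    have hεs₀ := (hε s₀ hs₀Icc).1
    have hεs₀pos : (0:ℝ) < ε s₀ := by nlinarith
    have hkey : y s₀ = 0 ∧ y' s₀ = 0 := by
      rcases hAB with hA' | hB'
      · have hy'0 : ∀ s ∈ Set.Ioo a b, y' s = 0 := by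
          intro s hs
          have h := (hterm s hs).1
          have : Complex.normSq (y' s) = 0 := by
            rcases mul_eq_zero.mp h with h' | h'
            · exact absurd h' (ne_of_gt hA')
            · exact h'
          exact Complex.normSq_eq_zero.mp this
        have hev : y' =ᶠ[nhds s₀] fun _ => 0 :=
          Filter.eventually_of_mem (isOpen_Ioo.mem_nhds hs0) (fun x hx => hy'0 x hx)
        have h0 : HasDerivAt y' 0 s₀ := (hasDerivAt_const _ _).congr_of_eventuallyEq hev
        have huni := (hy' s₀ hs₀Icc).unique h0
        have hys₀ : y s₀ = 0 := by
          have hne : κ ^ 2 * ((ε s₀ : ℝ) : ℂ) ≠ 0 := by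
            apply mul_ne_zero (pow_ne_zero _ hκ0)
            exact_mod_cast ne_of_gt hεs₀pos
          have : κ ^ 2 * ((ε s₀ : ℝ) : ℂ) * y s₀ = 0 := by
            rw [← neg_eq_zero]; exact huni
          rcases mul_eq_zero.mp this with h' | h'
          · exact absurd h' hne
          · exact h'
        exact ⟨hys₀, hy'0 s₀ hs0⟩
      · have hy0 : ∀ s ∈ Set.Ioo a b, y s = 0 := by
          intro s hs
          have h := (hterm s hs).2
          have hε' := (hε s (hsubIcc (Set.Ioo_subset_Icc_self hs))).1
          have hεpos : (0:ℝ) < ε s := by nlinarith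
          have : Complex.normSq (y s) = 0 := by
            rcases mul_eq_zero.mp h with h' | h'
            · exact absurd h' (ne_of_gt hB')
            · rcases mul_eq_zero.mp h' with h'' | h''
              · exact absurd h'' (ne_of_gt hεpos)
              · exact h''
          exact Complex.normSq_eq_zero.mp this
        have hev : y =ᶠ[nhds s₀] fun _ => 0 :=
          Filter.eventually_of_mem (isOpen_Ioo.mem_nhds hs0) (fun x hx => hy0 x hx)
        have h0 : HasDerivAt y 0 s₀ := (hasDerivAt_const _ _).congr_of_eventuallyEq hev
        have huni := (hy s₀ hs₀Icc).unique h0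
        exact ⟨hy0 s₀ hs0, huni.symm ▸ rfl⟩

    obtain ⟨s₁, hs₁, hy1⟩ := hnt
    exact hy1 (aux_unique sm sp n₁ n₂ hn₁ ε hε κ y y' hy hy' s₀ hs₀mem hkey.1 hkey.2 s₁ hs₁)
end

section
/- Let κ with Arg κ ∈ (-π/2, 0), ε bounded measurable with n₁² ≤ ε ≤ n₂², and y a nontrivial solution of y'' = -κ² ε y on [s₋, s₊]. If y(s₀) = 0 for some s₀ ∈ [s₋, s₊], then y'(s₀) ≠ 0 and y has no other zero in [s₋, s₊], i.e., the set {s ∈ [s₋,s₊] : y(s) = 0} consists of at most one point. -/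
open Set Complex

/-- Auxiliary uniqueness lemma: if a solution of `y'' = -κ² ε y` with bounded `ε`
vanishes together with its derivative at a point of `[sm, sp]`, it vanishes identically. -/
lemma stmt3_vanish (sm sp n₂ : ℝ)
    (ε : ℝ → ℝ) (hεb : ∀ s ∈ Set.Icc sm sp, |ε s| ≤ n₂ ^ 2)
    (κ : ℂ)
    (y y' : ℝ → ℂ)
    (hy : ∀ s ∈ Set.Icc sm sp, HasDerivAt y (y' s) s)
    (hy' : ∀ s ∈ Set.Icc sm sp, HasDerivAt y' (-(κ ^ 2 * (ε s : ℂ) * y s)) s)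
    (t₀ : ℝ) (ht₀ : t₀ ∈ Set.Icc sm sp) (h0 : y t₀ = 0) (h0' : y' t₀ = 0) :
    ∀ s ∈ Set.Icc sm sp, y s = 0 := by
  -- clamp ε so that it is bounded everywhere
  set εc : ℝ → ℝ := fun s => max (-(n₂ ^ 2)) (min (ε s) (n₂ ^ 2)) with hεc
  have hεc_eq : ∀ s ∈ Set.Icc sm sp, εc s = ε s := by
    intro s hs
    have h := hεb s hs
    have h1 : ε s ≤ n₂ ^ 2 := (abs_le.mp h).2
    have h2 : -(n₂ ^ 2) ≤ ε s := (abs_le.mp h).1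
    simp [hεc, min_eq_left h1, max_eq_right h2]
  have hεc_bd : ∀ s, |εc s| ≤ n₂ ^ 2 := by
    intro s
    have hn : (0:ℝ) ≤ n₂ ^ 2 := sq_nonneg _
    rw [abs_le]
    constructor
    · exact le_max_left _ _
    · exact max_le (by linarith) (min_le_right _ _)
  set v : ℝ → ℂ × ℂ → ℂ × ℂ := fun s p => (p.2, -(κ ^ 2 * (εc s : ℂ) * p.1)) with hv_def
  set Kr : ℝ := 1 + ‖κ‖ ^ 2 * n₂ ^ 2 with hKr
  have hKr0 : 0 ≤ Kr := by positivity
  set K : NNReal := Real.toNNReal Kr with hK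
  have hKco : (K : ℝ) = Kr := Real.coe_toNNReal _ hKr0
  have hlip : ∀ s, LipschitzWith K (v s) := by
    intro s
    apply LipschitzWith.of_dist_le_mul
    intro p q
    rw [Prod.dist_eq, Prod.dist_eq, hKco]
    have hmax0 : (0:ℝ) ≤ max (dist p.1 q.1) (dist p.2 q.2) :=
      le_trans dist_nonneg (le_max_left _ _)
    apply max_le
    · calc dist p.2 q.2 ≤ max (dist p.1 q.1) (dist p.2 q.2) := le_max_right _ _
        _ ≤ Kr * max (dist p.1 q.1) (dist p.2 q.2) := by
            nlinarith [mul_nonneg (mul_nonneg (sq_nonneg (‖κ‖)) (sq_nonneg n₂)) hmax0]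
    · have : dist (-(κ ^ 2 * (εc s : ℂ) * p.1)) (-(κ ^ 2 * (εc s : ℂ) * q.1))
          = ‖κ ^ 2 * (εc s : ℂ)‖ * dist p.1 q.1 := by
        rw [dist_neg_neg]
        simp only [dist_eq_norm]
        rw [← mul_sub, norm_mul]
      rw [this]
      have hb : ‖κ ^ 2 * (εc s : ℂ)‖ ≤ ‖κ‖ ^ 2 * n₂ ^ 2 := by
        rw [norm_mul, norm_pow]
        have := hεc_bd s
        have : ‖(εc s : ℂ)‖ ≤ n₂ ^ 2 := by
          rw [Complex.norm_real, Real.norm_eq_abs]; exact this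
        have h2 : (0:ℝ) ≤ ‖κ‖ ^ 2 := sq_nonneg _
        nlinarith [norm_nonneg ((εc s : ℂ))]
      calc ‖κ ^ 2 * (εc s : ℂ)‖ * dist p.1 q.1
          ≤ (‖κ‖ ^ 2 * n₂ ^ 2) * max (dist p.1 q.1) (dist p.2 q.2) := by
            have := dist_nonneg (x := p.1) (y := q.1)
            have hle : dist p.1 q.1 ≤ max (dist p.1 q.1) (dist p.2 q.2) := le_max_left _ _
            have h2 : (0:ℝ) ≤ ‖κ‖ ^ 2 * n₂ ^ 2 := by positivity
            nlinarith [norm_nonneg (κ ^ 2 * (εc s : ℂ))]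
        _ ≤ Kr * max (dist p.1 q.1) (dist p.2 q.2) := by nlinarith
  set f : ℝ → ℂ × ℂ := fun s => (y s, y' s) with hf_def
  set g : ℝ → ℂ × ℂ := fun _ => (0, 0) with hg_def
  have hf' : ∀ s ∈ Set.Icc sm sp, HasDerivAt f (v s (f s)) s := by
    intro s hs
    have h1 := (hy s hs).prodMk (hy' s hs)
    have : v s (f s) = (y' s, -(κ ^ 2 * (ε s : ℂ) * y s)) := by
      simp only [hv_def, hf_def, hεc_eq s hs]
    rw [this]
    exact h1
  have hfc : ContinuousOn f (Set.Icc sm sp) := by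
    intro s hs
    exact ((hy s hs).continuousAt.prodMk (hy' s hs).continuousAt).continuousWithinAt
  have hg' : ∀ s : ℝ, HasDerivAt g (v s (g s)) s := by
    intro s
    have : v s (g s) = (0, 0) := by simp [hv_def, hg_def]
    rw [this]
    exact hasDerivAt_const _ _
  have hgc : ContinuousOn g (Set.Icc sm sp) := continuousOn_const
  have hinit : f t₀ = g t₀ := by simp [hf_def, hg_def, h0, h0']
  have key : ∀ s ∈ Set.Icc sm sp, f s = g s := by
    intro s hs
    rcases le_total s t₀ with hst | hst
    · -- backward uniqueness on [sm, t₀]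
      have := ODE_solution_unique_of_mem_Icc_left
        (K := K) (v := v) (s := fun _ => (Set.univ : Set (ℂ × ℂ)))
        (f := f) (g := g) (a := sm) (b := t₀)
        (fun t _ => (hlip t).lipschitzOnWith)
        (hfc.mono (Set.Icc_subset_Icc_right ht₀.2))
        (fun t ht => (hf' t ⟨le_of_lt ht.1, le_trans ht.2 ht₀.2⟩).hasDerivWithinAt)
        (fun _ _ => trivial)
        (hgc.mono (Set.Icc_subset_Icc_right ht₀.2))
        (fun t _ => (hg' t).hasDerivWithinAt)
        (fun _ _ => trivial) hinit
      exact this ⟨hs.1, hst⟩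
    · -- forward uniqueness on [t₀, sp]
      have := ODE_solution_unique_of_mem_Icc_right
        (K := K) (v := v) (s := fun _ => (Set.univ : Set (ℂ × ℂ)))
        (f := f) (g := g) (a := t₀) (b := sp)
        (fun t _ => (hlip t).lipschitzOnWith)
        (hfc.mono (Set.Icc_subset_Icc_left ht₀.1))
        (fun t ht => (hf' t ⟨le_trans ht₀.1 ht.1, le_of_lt ht.2⟩).hasDerivWithinAt)
        (fun _ _ => trivial)
        (hgc.mono (Set.Icc_subset_Icc_left ht₀.1))
        (fun t _ => (hg' t).hasDerivWithinAt)
        (fun _ _ => trivial) hinit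
      exact this ⟨hst, hs.2⟩
  intro s hs
  have := key s hs
  have : (f s).1 = (g s).1 := by rw [this]
  simpa [hf_def, hg_def] using this

/-- For `Arg κ ∈ (-π/2,0)` and a nontrivial solution `y` of `y'' = -κ² ε y`
with `n₁² ≤ ε ≤ n₂²`, if `y(s₀) = 0` for some `s₀ ∈ [s₋,s₊]`, then `y'(s₀) ≠ 0` and `s₀`
is the only zero of `y` in `[s₋,s₊]`. -/
theorem stmt3 (sm sp n₁ n₂ : ℝ) (hsm : sm < sp) (hn₁ : 0 < n₁) (hn12 : n₁ < n₂)
    (ε : ℝ → ℝ) (hε : ∀ s ∈ Set.Icc sm sp, n₁ ^ 2 ≤ ε s ∧ ε s ≤ n₂ ^ 2)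
    (κ : ℂ) (hκarg : κ.arg ∈ Set.Ioo (-(Real.pi / 2)) 0)
    (y y' : ℝ → ℂ)
    (hy : ∀ s ∈ Set.Icc sm sp, HasDerivAt y (y' s) s)
    (hy' : ∀ s ∈ Set.Icc sm sp, HasDerivAt y' (-(κ ^ 2 * (ε s : ℂ) * y s)) s)
    (hnt : ∃ s ∈ Set.Icc sm sp, y s ≠ 0)
    (s₀ : ℝ) (hs₀ : s₀ ∈ Set.Icc sm sp) (hy₀ : y s₀ = 0) :
    y' s₀ ≠ 0 ∧ ∀ s ∈ Set.Icc sm sp, y s = 0 → s = s₀ := by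
  obtain ⟨harg1, harg2⟩ := hκarg
  -- bound on ε for the uniqueness lemma
  have hεb : ∀ s ∈ Set.Icc sm sp, |ε s| ≤ n₂ ^ 2 := by
    intro s hs
    obtain ⟨h1, h2⟩ := hε s hs
    rw [abs_le]
    constructor
    · nlinarith
    · exact h2
  have vanish := stmt3_vanish sm sp n₂ ε hεb κ y y' hy hy'
  -- properties of κ
  have him : κ.im < 0 := Complex.arg_neg_iff.mp harg2
  have hκ0 : κ ≠ 0 := by
    intro h
    rw [h, Complex.arg_zero] at harg2
    exact lt_irrefl 0 harg2
  have hre : 0 < κ.re := by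
    have habs : |κ.arg| < Real.pi / 2 := by
      rw [abs_lt]
      constructor
      · exact neg_lt_of_neg_lt (by linarith [harg1])
      · have := Real.pi_pos; linarith
    rcases Complex.abs_arg_lt_pi_div_two_iff.mp habs with h | h
    · exact h
    · exact absurd h hκ0
  -- the monotone functional
  set c : ℂ := -Complex.I * (starRingEnd ℂ) (κ ^ 2) with hc
  set m : ℝ := c.re with hm_def
  have hm : 0 < m := by
    have : m = -(2 * κ.re * κ.im) := by
      simp only [hm_def, hc, Complex.mul_re, Complex.mul_im, Complex.neg_re, Complex.neg_im,
        Complex.I_re, Complex.I_im, RingHomCompTriple.comp_apply, Complex.conj_re,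
        Complex.conj_im, map_pow, pow_two]
      ring
    rw [this]
    nlinarith
  set G : ℝ → ℝ := fun s => (c * (starRingEnd ℂ) (y s) * y' s).re with hG_def
  have hG : ∀ s ∈ Set.Icc sm sp, HasDerivAt G (m * Complex.normSq (y' s)) s := by
    intro s hs
    have h1 : HasDerivAt (fun t => c * (starRingEnd ℂ) (y t) * y' t)
        (c * (starRingEnd ℂ) (y' s) * y' s
          + c * (starRingEnd ℂ) (y s) * (-(κ ^ 2 * (ε s : ℂ) * y s))) s := by
      have hconj : HasDerivAt (fun t => c * (starRingEnd ℂ) (y t))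
          (c * (starRingEnd ℂ) (y' s)) s :=
        HasDerivAt.const_mul c (hy s hs).star
      exact hconj.mul (hy' s hs)
    have h2 := Complex.reCLM.hasFDerivAt.comp_hasDerivAt s h1
    have h3 : (c * (starRingEnd ℂ) (y' s) * y' s
        + c * (starRingEnd ℂ) (y s) * (-(κ ^ 2 * (ε s : ℂ) * y s))).re
        = m * Complex.normSq (y' s) := by
      simp [hm_def, hc, Complex.mul_re, Complex.mul_im, Complex.normSq_apply, pow_two]
      ring
    simp only [Function.comp_def, Complex.reCLM_apply] at h2
    rw [h3] at h2
    exact h2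
  -- G is monotone on [sm, sp]
  have hmono : MonotoneOn G (Set.Icc sm sp) := by
    apply monotoneOn_of_deriv_nonneg (convex_Icc sm sp)
    · intro s hs
      exact (hG s hs).continuousAt.continuousWithinAt
    · rw [interior_Icc]
      intro s hs
      exact (hG s (Set.Ioo_subset_Icc_self hs)).differentiableAt.differentiableWithinAt
    · rw [interior_Icc]
      intro s hs
      rw [(hG s (Set.Ioo_subset_Icc_self hs)).deriv]
      exact mul_nonneg hm.le (Complex.normSq_nonneg _)
  -- G vanishes at zeros of y
  have hGzero : ∀ s, y s = 0 → G s = 0 := by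
    intro s h
    simp [hG_def, h]
  -- key: no two distinct zeros
  have key : ∀ a b : ℝ, a ∈ Set.Icc sm sp → b ∈ Set.Icc sm sp → a < b →
      y a = 0 → y b = 0 → False := by
    intro a b ha hb hab hya hyb
    have hsub : Set.Icc a b ⊆ Set.Icc sm sp := Set.Icc_subset_Icc ha.1 hb.2
    have hzero : ∀ t ∈ Set.Icc a b, G t = 0 := by
      intro t ht
      have h1 : G a ≤ G t := hmono ha (hsub ht) ht.1
      have h2 : G t ≤ G b := hmono (hsub ht) hb ht.2
      rw [hGzero a hya] at h1
      rw [hGzero b hyb] at h2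
      linarith
    have hu : UniqueDiffWithinAt ℝ (Set.Icc a b) a :=
      (uniqueDiffOn_Icc hab) a (Set.left_mem_Icc.mpr hab.le)
    have h1 : HasDerivWithinAt G (m * Complex.normSq (y' a)) (Set.Icc a b) a :=
      (hG a ha).hasDerivWithinAt
    have h2 : HasDerivWithinAt G 0 (Set.Icc a b) a := by
      have hconst : HasDerivWithinAt (fun _ : ℝ => (0 : ℝ)) 0 (Set.Icc a b) a :=
        (hasDerivAt_const a (0:ℝ)).hasDerivWithinAt
      exact hconst.congr hzero (hzero a (Set.left_mem_Icc.mpr hab.le))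
    have heq : m * Complex.normSq (y' a) = 0 := by
      have e1 := h1.derivWithin hu
      have e2 := h2.derivWithin hu
      rw [← e1, e2]
    have hy'a : y' a = 0 := by
      have : Complex.normSq (y' a) = 0 := by
        rcases mul_eq_zero.mp heq with h | h
        · exact absurd h (ne_of_gt hm)
        · exact h
      exact Complex.normSq_eq_zero.mp this
    obtain ⟨s, hs, hys⟩ := hnt
    exact hys (vanish a ha hya hy'a s hs)
  constructor
  · intro h0'
    obtain ⟨s, hs, hys⟩ := hnt
    exact hys (vanish s₀ hs₀ hy₀ h0' s hs)
  · intro s hs hys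
    by_contra hne
    rcases lt_or_gt_of_ne hne with h | h
    · exact key s s₀ hs hs₀ h hys hy₀
    · exact key s₀ s hs₀ hs h hy₀ hys
end

section
/- Let ε be constant equal to ϵ > 0 on (s₋, s₊), κ ∈ ℂ \ {0}, η₋, η₊ ∈ ℂ̂ with ϑ₋ := I(ϵ^{-1/2} η₋) ∉ {0, ∞} and ϑ₊ := I(ϵ^{-1/2} η₊) ∉ {0, ∞}, η₋ ≠ η₊. Then κ is an (η₋, η₊)-eigenvalue of the constant coefficient ϵ on (s₋, s₊) (i.e., there is a nontrivial solution y of y'' = -κ² ϵ y with y'(s_±)/(iκ y(s_±)) = η_±) if and only if κ = -i/(2(s₊-s₋)ϵ^{1/2}) · Log(ϑ₋/ϑ₊) + π n/((s₊-s₋) ϵ^{1/2}) for some integer n, where Log is the principal branch of the complex logarithm. -/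
open Complex

lemma const_of_deriv_zero {F : ℝ → ℂ} {a b : ℝ}
    (h : ∀ s ∈ Set.Icc a b, HasDerivAt F 0 s) :
    ∀ s ∈ Set.Icc a b, F s = F a := by
  apply constant_of_has_deriv_right_zero
  · exact fun s hs => (h s hs).continuousAt.continuousWithinAt
  · exact fun s hs => (h s (Set.mem_Icc_of_Ico hs)).hasDerivWithinAt

lemma hasDerivAt_explin (c : ℂ) (s : ℝ) :
    HasDerivAt (fun t : ℝ => Complex.exp (c * t)) (c * Complex.exp (c * s)) s := by
  have h1 : HasDerivAt (fun t : ℝ => c * (t : ℂ)) c s := by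
    simpa using (Complex.ofRealCLM.hasDerivAt (x := s)).const_mul c
  simpa [mul_comm] using h1.cexp

lemma bc_infty (r κ : ℂ) (hκ : κ ≠ 0) (hr : r ≠ 0) (ϑ : ℂ) (hϑ : ϑ = -1) (Y Y' : ℂ) :
    Y = 0 ↔ ϑ * (Y' + Complex.I * (κ * r) * Y) = -(Y' - Complex.I * (κ * r) * Y) := by
  have hIκr : Complex.I * (κ * r) ≠ 0 := by
    simp [Complex.I_ne_zero, hκ, hr]
  subst hϑ
  constructor
  · intro hY; rw [hY]; ring
  · intro hE
    have h2 : (2 : ℂ) * (Complex.I * (κ * r)) * Y = 0 := by linear_combination -hE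
    have := mul_ne_zero (by norm_num : (2:ℂ) ≠ 0) hIκr
    exact (mul_eq_zero.mp h2).resolve_left this

lemma bc_coe (r κ : ℂ) (hκ : κ ≠ 0) (hr : r ≠ 0) (ϑ h : ℂ)
    (hne : h ≠ -r) (hϑv : ϑ = (1 - h / r) / (1 + h / r)) (Y Y' : ℂ) :
    Y' = Complex.I * κ * h * Y ↔
    ϑ * (Y' + Complex.I * (κ * r) * Y) = -(Y' - Complex.I * (κ * r) * Y) := by
  have hrh : r + h ≠ 0 := by
    intro hc; exact hne (by linear_combination hc)
  have hden : (1 : ℂ) + h / r ≠ 0 := by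
    intro hc
    apply hrh
    field_simp at hc
    linear_combination hc
  have hϑeq : ϑ * (r + h) = r - h := by
    rw [hϑv]
    field_simp
  constructor
  · intro hY
    have key : (ϑ * (Y' + Complex.I * (κ * r) * Y) + (Y' - Complex.I * (κ * r) * Y)) * (r + h) = 0 := by
      linear_combination (Y' + Complex.I * (κ * r) * Y) * hϑeq + 2 * r * hY
    have := (mul_eq_zero.mp key).resolve_right hrh
    linear_combination this
  · intro hE
    have key : 2 * r * (Y' - Complex.I * κ * h * Y) = 0 := by
      linear_combination (r + h) * hE - (Y' + Complex.I * (κ * r) * Y) * hϑeq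
    have h2 := (mul_eq_zero.mp key).resolve_left (by simp [hr] : (2:ℂ) * r ≠ 0)
    linear_combination h2

lemma theta_ne_neg_one (r h ϑ : ℂ) (hr : r ≠ 0) (hne : h ≠ -r)
    (hv : ϑ = (1 - h / r) / (1 + h / r)) : ϑ ≠ -1 := by
  have hrh : r + h ≠ 0 := by
    intro hc; exact hne (by linear_combination hc)
  have hden : (1 : ℂ) + h / r ≠ 0 := by
    intro hc
    apply hrh
    field_simp at hc
    linear_combination hc
  have hϑeq : ϑ * (r + h) = r - h := by
    rw [hv]; field_simp
  intro hc
  rw [hc] at hϑeq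
  apply hr
  have : (2:ℂ) * r = 0 := by linear_combination -hϑeq
  exact (mul_eq_zero.mp this).resolve_left (by norm_num : (2:ℂ) ≠ 0)

lemma ode_aux (κ : ℂ) (ϵ : ℝ) (sm sp : ℝ) (y y' : ℝ → ℂ)
    (hy : ∀ s ∈ Set.Icc sm sp, HasDerivAt y (y' s) s)
    (hy' : ∀ s ∈ Set.Icc sm sp, HasDerivAt y' (-(κ ^ 2 * (ϵ:ℂ) * y s)) s)
    (c : ℂ) (hc2 : c ^ 2 = -(κ ^ 2 * (ϵ:ℂ))) :
    ∀ s ∈ Set.Icc sm sp,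
      Complex.exp (-c * s) * (y' s + c * y s)
        = Complex.exp (-c * sm) * (y' sm + c * y sm) := by
  apply const_of_deriv_zero
  intro s hsmem
  have d1 := hasDerivAt_explin (-c) s
  have d2 : HasDerivAt (fun t => y' t + c * y t) (-(κ^2*(ϵ:ℂ)*y s) + c * y' s) s :=
    (hy' s hsmem).add ((hy s hsmem).const_mul c)
  have dd := d1.mul d2
  refine dd.congr_deriv ?_
  have E : Complex.exp (-c * (s:ℂ)) * y s * (c ^ 2 + κ ^ 2 * (ϵ:ℂ)) = 0 := by
    rw [hc2]; ring
  linear_combination -E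

lemma master (sm sp ϵ : ℝ) (hs : sm < sp) (hϵ : 0 < ϵ)
    (κ : ℂ) (hκ : κ ≠ 0)
    (ϑm ϑp : ℂ) (hϑm0 : ϑm ≠ 0) (hϑp0 : ϑp ≠ 0)
    (hϑ1 : ¬(ϑm = -1 ∧ ϑp = -1))
    (Pm Pp : ℂ → ℂ → Prop)
    (hPm : ∀ Y Y' : ℂ, Pm Y Y' ↔
      ϑm * (Y' + Complex.I * (κ * (Real.sqrt ϵ : ℂ)) * Y)
        = -(Y' - Complex.I * (κ * (Real.sqrt ϵ : ℂ)) * Y))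
    (hPp : ∀ Y Y' : ℂ, Pp Y Y' ↔
      ϑp * (Y' + Complex.I * (κ * (Real.sqrt ϵ : ℂ)) * Y)
        = -(Y' - Complex.I * (κ * (Real.sqrt ϵ : ℂ)) * Y)) :
    (∃ y y' : ℝ → ℂ,
        (∀ s ∈ Set.Icc sm sp, HasDerivAt y (y' s) s) ∧
        (∀ s ∈ Set.Icc sm sp, HasDerivAt y' (-(κ ^ 2 * (ϵ : ℂ) * y s)) s) ∧
        (∃ s ∈ Set.Icc sm sp, y s ≠ 0) ∧
        Pm (y sm) (y' sm) ∧ Pp (y sp) (y' sp)) ↔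
    ∃ n : ℤ,
      κ = -Complex.I / (2 * ((sp : ℂ) - (sm : ℂ)) * (Real.sqrt ϵ : ℂ)) *
            Complex.log (ϑm / ϑp)
          + (Real.pi : ℂ) * (n : ℂ) / (((sp : ℂ) - (sm : ℂ)) * (Real.sqrt ϵ : ℂ)) := by
  have hrpos : 0 < Real.sqrt ϵ := Real.sqrt_pos.mpr hϵ
  set r : ℂ := (Real.sqrt ϵ : ℂ) with hrdef
  have hr0 : r ≠ 0 := by
    simp only [hrdef, ne_eq, Complex.ofReal_eq_zero]
    exact hrpos.ne'
  have hr2 : r ^ 2 = (ϵ : ℂ) := by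
    rw [hrdef]
    norm_cast
    exact Real.sq_sqrt hϵ.le
  set μ : ℂ := κ * r with hμdef
  have hμ0 : μ ≠ 0 := mul_ne_zero hκ hr0
  have hμsq : μ ^ 2 = κ ^ 2 * (ϵ : ℂ) := by
    rw [hμdef, mul_pow, hr2]
  have hIμ0 : Complex.I * μ ≠ 0 := mul_ne_zero Complex.I_ne_zero hμ0
  set L : ℂ := (sp : ℂ) - (sm : ℂ) with hLdef
  have hL0 : L ≠ 0 := by
    rw [hLdef, sub_ne_zero]
    exact_mod_cast hs.ne'
  have hw0 : ϑm / ϑp ≠ 0 := div_ne_zero hϑm0 hϑp0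
  have hc2a : (Complex.I * μ) ^ 2 = -(κ ^ 2 * (ϵ:ℂ)) := by
    rw [mul_pow, Complex.I_sq, hμsq]; ring
  have hc2b : (-(Complex.I * μ)) ^ 2 = -(κ ^ 2 * (ϵ:ℂ)) := by
    rw [neg_pow, hc2a]; ring
  have hW : Complex.exp (2 * Complex.I * μ * L) * Complex.exp (Complex.I * μ * (sm:ℂ)) ^ 2
      = Complex.exp (Complex.I * μ * (sp:ℂ)) ^ 2 := by
    rw [← Complex.exp_nat_mul, ← Complex.exp_nat_mul, ← Complex.exp_add]
    congr 1
    rw [hLdef]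
    push_cast
    ring
  have hprod : ∀ t : ℝ, Complex.exp (-(Complex.I*μ) * t) * Complex.exp (Complex.I*μ * t) = 1 := by
    intro t
    rw [← Complex.exp_add, neg_mul, neg_add_cancel, Complex.exp_zero]
  have key : (∃ y y' : ℝ → ℂ,
        (∀ s ∈ Set.Icc sm sp, HasDerivAt y (y' s) s) ∧
        (∀ s ∈ Set.Icc sm sp, HasDerivAt y' (-(κ ^ 2 * (ϵ : ℂ) * y s)) s) ∧
        (∃ s ∈ Set.Icc sm sp, y s ≠ 0) ∧
        Pm (y sm) (y' sm) ∧ Pp (y sp) (y' sp)) ↔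
      Complex.exp (2 * Complex.I * μ * L) = ϑm / ϑp := by
    constructor
    · rintro ⟨y, y', hy, hy', ⟨s0, hs0, hy0⟩, hbm, hbp⟩
      replace hbm := (hPm (y sm) (y' sm)).mp hbm
      replace hbp := (hPp (y sp) (y' sp)).mp hbp
      have hF := ode_aux κ ϵ sm sp y y' hy hy' (Complex.I * μ) hc2a
      have hG := ode_aux κ ϵ sm sp y y' hy hy' (-(Complex.I * μ)) hc2b
      simp only [neg_neg] at hG
      have hu : ∀ s ∈ Set.Icc sm sp,
          Complex.exp (Complex.I*μ*(sm:ℂ)) * (y' s + Complex.I * μ * y s)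
            = Complex.exp (Complex.I*μ*(s:ℂ)) * (y' sm + Complex.I * μ * y sm) := by
        intro s hsmem
        linear_combination (Complex.exp (Complex.I*μ*(s:ℂ)) * Complex.exp (Complex.I*μ*(sm:ℂ))) * (hF s hsmem)
          - (Complex.exp (Complex.I*μ*(sm:ℂ)) * (y' s + Complex.I*μ*y s)) * hprod s
          + (Complex.exp (Complex.I*μ*(s:ℂ)) * (y' sm + Complex.I*μ*y sm)) * hprod sm
      have hv : ∀ s ∈ Set.Icc sm sp,
          Complex.exp (Complex.I*μ*(s:ℂ)) * (y' s - Complex.I * μ * y s)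
            = Complex.exp (Complex.I*μ*(sm:ℂ)) * (y' sm - Complex.I * μ * y sm) := by
        intro s hsmem
        linear_combination hG s hsmem
      have hspI : sp ∈ Set.Icc sm sp := Set.right_mem_Icc.mpr hs.le
      have hum0 : y' sm + Complex.I * μ * y sm ≠ 0 := by
        intro hc
        have hvm0 : y' sm - Complex.I * μ * y sm = 0 := by
          linear_combination hbm - ϑm * hc
        apply hy0
        have h1 := hu s0 hs0
        have h2 := hv s0 hs0
        rw [hc, mul_zero] at h1
        rw [hvm0, mul_zero] at h2
        have h3 : Complex.exp (Complex.I*μ*(sm:ℂ)) * Complex.exp (Complex.I*μ*((s0:ℝ):ℂ))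
            * ((2 : ℂ) * (Complex.I * μ) * y s0) = 0 := by
          linear_combination Complex.exp (Complex.I*μ*((s0:ℝ):ℂ)) * h1 - Complex.exp (Complex.I*μ*(sm:ℂ)) * h2
        have h4 := (mul_eq_zero.mp h3).resolve_left
          (mul_ne_zero (Complex.exp_ne_zero _) (Complex.exp_ne_zero _))
        exact (mul_eq_zero.mp h4).resolve_left
          (mul_ne_zero (by norm_num : (2:ℂ) ≠ 0) hIμ0)
      have e1 : ϑp * Complex.exp (Complex.I*μ*(sp:ℂ)) ^ 2 * (y' sm + Complex.I * μ * y sm)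
          = ϑm * Complex.exp (Complex.I*μ*(sm:ℂ)) ^ 2 * (y' sm + Complex.I * μ * y sm) := by
        linear_combination (Complex.exp (Complex.I*μ*(sm:ℂ)) * Complex.exp (Complex.I*μ*(sp:ℂ))) * hbp
          - (ϑp * Complex.exp (Complex.I*μ*(sp:ℂ))) * hu sp hspI
          - Complex.exp (Complex.I*μ*(sm:ℂ)) * hv sp hspI
          - Complex.exp (Complex.I*μ*(sm:ℂ)) ^ 2 * hbm
      have e2 := mul_right_cancel₀ hum0 e1
      rw [eq_div_iff hϑp0]
      refine mul_right_cancel₀ (pow_ne_zero 2 (Complex.exp_ne_zero (Complex.I*μ*(sm:ℂ)))) ?_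
      linear_combination ϑp * hW + e2
    · intro hE
      rw [eq_div_iff hϑp0] at hE
      have hb : ϑp * Complex.exp (Complex.I*μ*(sp:ℂ)) ^ 2 = ϑm * Complex.exp (Complex.I*μ*(sm:ℂ)) ^ 2 := by
        linear_combination -ϑp * hW + Complex.exp (Complex.I*μ*(sm:ℂ)) ^ 2 * hE
      refine ⟨fun s => Complex.exp (Complex.I * μ * s)
          + (ϑm * Complex.exp (Complex.I*μ*(sm:ℂ)) ^ 2) * Complex.exp (-(Complex.I * μ) * s),
        fun s => Complex.I * μ * Complex.exp (Complex.I * μ * s)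
          - Complex.I * μ * (ϑm * Complex.exp (Complex.I*μ*(sm:ℂ)) ^ 2) * Complex.exp (-(Complex.I * μ) * s),
        ?_, ?_, ?_, ?_, ?_⟩
      · intro s hsmem
        have d := (hasDerivAt_explin (Complex.I * μ) s).add
          ((hasDerivAt_explin (-(Complex.I * μ)) s).const_mul
            (ϑm * Complex.exp (Complex.I*μ*(sm:ℂ)) ^ 2))
        refine d.congr_deriv ?_
        ring
      · intro s hsmem
        have d := ((hasDerivAt_explin (Complex.I * μ) s).const_mul (Complex.I * μ)).sub
          ((hasDerivAt_explin (-(Complex.I * μ)) s).const_mul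
            (Complex.I * μ * (ϑm * Complex.exp (Complex.I*μ*(sm:ℂ)) ^ 2)))
        refine d.congr_deriv ?_
        have E1 : (Complex.exp (Complex.I * μ * (s:ℂ))
              + ϑm * Complex.exp (Complex.I*μ*(sm:ℂ)) ^ 2 * Complex.exp (-(Complex.I * μ) * (s:ℂ)))
            * ((Complex.I*μ)^2 + κ^2*(ϵ:ℂ)) = 0 := by
          rw [hc2a]; ring
        linear_combination E1
      · have hysm : Complex.exp (Complex.I * μ * (sm:ℂ))
            + ϑm * Complex.exp (Complex.I*μ*(sm:ℂ)) ^ 2 * Complex.exp (-(Complex.I * μ) * (sm:ℂ))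
            = Complex.exp (Complex.I * μ * (sm:ℂ)) * (1 + ϑm) := by
          linear_combination (ϑm * Complex.exp (Complex.I*μ*(sm:ℂ))) * hprod sm
        have hysp : Complex.exp (Complex.I * μ * (sp:ℂ))
            + ϑm * Complex.exp (Complex.I*μ*(sm:ℂ)) ^ 2 * Complex.exp (-(Complex.I * μ) * (sp:ℂ))
            = Complex.exp (Complex.I * μ * (sp:ℂ)) * (1 + ϑp) := by
          linear_combination -Complex.exp (-(Complex.I * μ) * (sp:ℂ)) * hb
            + (ϑp * Complex.exp (Complex.I*μ*(sp:ℂ))) * hprod sp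
        by_cases hm1 : ϑm = -1
        · refine ⟨sp, Set.right_mem_Icc.mpr hs.le, ?_⟩
          have hϑp1 : ϑp ≠ -1 := fun hc => hϑ1 ⟨hm1, hc⟩
          show Complex.exp (Complex.I * μ * (sp:ℂ))
            + ϑm * Complex.exp (Complex.I*μ*(sm:ℂ)) ^ 2 * Complex.exp (-(Complex.I * μ) * (sp:ℂ)) ≠ 0
          rw [hysp]
          refine mul_ne_zero (Complex.exp_ne_zero _) ?_
          intro hc
          exact hϑp1 (by linear_combination hc)
        · refine ⟨sm, Set.left_mem_Icc.mpr hs.le, ?_⟩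
          show Complex.exp (Complex.I * μ * (sm:ℂ))
            + ϑm * Complex.exp (Complex.I*μ*(sm:ℂ)) ^ 2 * Complex.exp (-(Complex.I * μ) * (sm:ℂ)) ≠ 0
          rw [hysm]
          refine mul_ne_zero (Complex.exp_ne_zero _) ?_
          intro hc
          exact hm1 (by linear_combination hc)
      · apply (hPm _ _).mpr
        show ϑm * ((Complex.I * μ * Complex.exp (Complex.I * μ * (sm:ℂ))
              - Complex.I * μ * (ϑm * Complex.exp (Complex.I*μ*(sm:ℂ)) ^ 2) * Complex.exp (-(Complex.I * μ) * (sm:ℂ)))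
            + Complex.I * μ * (Complex.exp (Complex.I * μ * (sm:ℂ))
              + ϑm * Complex.exp (Complex.I*μ*(sm:ℂ)) ^ 2 * Complex.exp (-(Complex.I * μ) * (sm:ℂ))))
          = -((Complex.I * μ * Complex.exp (Complex.I * μ * (sm:ℂ))
              - Complex.I * μ * (ϑm * Complex.exp (Complex.I*μ*(sm:ℂ)) ^ 2) * Complex.exp (-(Complex.I * μ) * (sm:ℂ)))
            - Complex.I * μ * (Complex.exp (Complex.I * μ * (sm:ℂ))
              + ϑm * Complex.exp (Complex.I*μ*(sm:ℂ)) ^ 2 * Complex.exp (-(Complex.I * μ) * (sm:ℂ))))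
        linear_combination (-2*Complex.I*μ*ϑm*Complex.exp (Complex.I*μ*(sm:ℂ))) * hprod sm
      · apply (hPp _ _).mpr
        show ϑp * ((Complex.I * μ * Complex.exp (Complex.I * μ * (sp:ℂ))
              - Complex.I * μ * (ϑm * Complex.exp (Complex.I*μ*(sm:ℂ)) ^ 2) * Complex.exp (-(Complex.I * μ) * (sp:ℂ)))
            + Complex.I * μ * (Complex.exp (Complex.I * μ * (sp:ℂ))
              + ϑm * Complex.exp (Complex.I*μ*(sm:ℂ)) ^ 2 * Complex.exp (-(Complex.I * μ) * (sp:ℂ))))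
          = -((Complex.I * μ * Complex.exp (Complex.I * μ * (sp:ℂ))
              - Complex.I * μ * (ϑm * Complex.exp (Complex.I*μ*(sm:ℂ)) ^ 2) * Complex.exp (-(Complex.I * μ) * (sp:ℂ)))
            - Complex.I * μ * (Complex.exp (Complex.I * μ * (sp:ℂ))
              + ϑm * Complex.exp (Complex.I*μ*(sm:ℂ)) ^ 2 * Complex.exp (-(Complex.I * μ) * (sp:ℂ))))
        linear_combination (-2*Complex.I*μ*ϑp*Complex.exp (Complex.I*μ*(sp:ℂ))) * hprod sp
          + (2*Complex.I*μ*Complex.exp (-(Complex.I * μ) * (sp:ℂ))) * hb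
  have partC : Complex.exp (2 * Complex.I * μ * L) = ϑm / ϑp ↔
      ∃ n : ℤ, κ = -Complex.I / (2 * L * r) * Complex.log (ϑm / ϑp)
          + (Real.pi : ℂ) * (n : ℂ) / (L * r) := by
    conv_lhs => rw [← Complex.exp_log hw0]
    rw [Complex.exp_eq_exp_iff_exists_int]
    have hLr : L * r ≠ 0 := mul_ne_zero hL0 hr0
    constructor
    · rintro ⟨n, hn⟩
      refine ⟨n, ?_⟩
      rw [hμdef] at hn
      have goal' : κ * (2 * L * r) = -Complex.I * Complex.log (ϑm / ϑp) + 2 * (Real.pi:ℂ) * (n:ℂ) := by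
        linear_combination (-Complex.I) * hn +
          (2 * κ * r * L - 2 * (n:ℂ) * (Real.pi:ℂ)) * Complex.I_sq
      have hinv : (2 * L * r) * (2 * L * r)⁻¹ = 1 := mul_inv_cancel₀ (mul_ne_zero (mul_ne_zero two_ne_zero hL0) hr0)
      have h3 : (2 * L * r)⁻¹ = 2⁻¹ * (L * r)⁻¹ := by rw [mul_assoc, mul_inv]
      linear_combination (-κ) * hinv + (2 * L * r)⁻¹ * goal' + (2 * (Real.pi:ℂ) * (n:ℂ)) * h3
    · rintro ⟨n, hn⟩
      refine ⟨n, ?_⟩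
      rw [hμdef, hn]
      have e1 : -Complex.I / (2 * L * r) * (2 * L * r) = -Complex.I :=
        div_mul_cancel₀ _ (mul_ne_zero (mul_ne_zero two_ne_zero hL0) hr0)
      have e2 : (Real.pi : ℂ) * (n : ℂ) / (L * r) * (L * r) = (Real.pi : ℂ) * (n : ℂ) :=
        div_mul_cancel₀ _ hLr
      linear_combination (Complex.I * Complex.log (ϑm / ϑp)) * e1 + (2 * Complex.I) * e2
        - Complex.log (ϑm / ϑp) * Complex.I_sq
  exact key.trans partC

/-- Eigenvalues of the constant resonator. Let `ε ≡ ϵ > 0` on `(s₋,s₊)`,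
`η₋ ≠ η₊` in the Riemann sphere `ℂ ∪ {∞}` (encoded as `OnePoint ℂ`, `none = ∞`),
with ilog-phases `ϑ_± = I(ϵ^{-1/2} η_±) ∉ {0, ∞}`. Then `κ ≠ 0` is an
`(η₋,η₊)`-eigenvalue (boundary conditions `y'(s_±) = iκ η_± y(s_±)`, interpreted as
`y(s_±) = 0` when `η_± = ∞`) iff
`κ = -i/(2(s₊-s₋)√ϵ) Log(ϑ₋/ϑ₊) + πn/((s₊-s₋)√ϵ)` for some `n : ℤ`. -/
theorem stmt12 (sm sp ϵ : ℝ) (hs : sm < sp) (hϵ : 0 < ϵ)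
    (κ : ℂ) (hκ : κ ≠ 0)
    (ηm ηp : OnePoint ℂ) (hη : ηm ≠ ηp)
    (ϑm ϑp : ℂ) (hϑm0 : ϑm ≠ 0) (hϑp0 : ϑp ≠ 0)
    (hϑm : match ηm with
      | none => ϑm = -1
      | some h => h ≠ -(Real.sqrt ϵ : ℂ) ∧
          ϑm = (1 - h / (Real.sqrt ϵ : ℂ)) / (1 + h / (Real.sqrt ϵ : ℂ)))
    (hϑp : match ηp with
      | none => ϑp = -1
      | some h => h ≠ -(Real.sqrt ϵ : ℂ) ∧
          ϑp = (1 - h / (Real.sqrt ϵ : ℂ)) / (1 + h / (Real.sqrt ϵ : ℂ))) :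
    (∃ y y' : ℝ → ℂ,
        (∀ s ∈ Set.Icc sm sp, HasDerivAt y (y' s) s) ∧
        (∀ s ∈ Set.Icc sm sp, HasDerivAt y' (-(κ ^ 2 * (ϵ : ℂ) * y s)) s) ∧
        (∃ s ∈ Set.Icc sm sp, y s ≠ 0) ∧
        (match ηm with
          | none => y sm = 0
          | some h => y' sm = Complex.I * κ * h * y sm) ∧
        (match ηp with
          | none => y sp = 0
          | some h => y' sp = Complex.I * κ * h * y sp)) ↔
    ∃ n : ℤ,
      κ = -Complex.I / (2 * ((sp : ℂ) - (sm : ℂ)) * (Real.sqrt ϵ : ℂ)) *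
            Complex.log (ϑm / ϑp)
          + (Real.pi : ℂ) * (n : ℂ) / (((sp : ℂ) - (sm : ℂ)) * (Real.sqrt ϵ : ℂ)) := by
  have hrpos : 0 < Real.sqrt ϵ := Real.sqrt_pos.mpr hϵ
  have hr0 : (Real.sqrt ϵ : ℂ) ≠ 0 := by
    simp only [ne_eq, Complex.ofReal_eq_zero]
    exact hrpos.ne'
  cases ηm with
  | infty =>
    have hm : ϑm = -1 := hϑm
    cases ηp with
    | infty => exact absurd rfl hη
    | coe h =>
      have hp : h ≠ -(Real.sqrt ϵ : ℂ) ∧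
          ϑp = (1 - h / (Real.sqrt ϵ : ℂ)) / (1 + h / (Real.sqrt ϵ : ℂ)) := hϑp
      exact master sm sp ϵ hs hϵ κ hκ ϑm ϑp hϑm0 hϑp0
        (fun hc => theta_ne_neg_one _ h ϑp hr0 hp.1 hp.2 hc.2)
        (fun Y Y' => Y = 0) (fun Y Y' => Y' = Complex.I * κ * h * Y)
        (fun Y Y' => bc_infty _ κ hκ hr0 ϑm hm Y Y')
        (fun Y Y' => bc_coe _ κ hκ hr0 ϑp h hp.1 hp.2 Y Y')
  | coe g =>
    have hm : g ≠ -(Real.sqrt ϵ : ℂ) ∧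
        ϑm = (1 - g / (Real.sqrt ϵ : ℂ)) / (1 + g / (Real.sqrt ϵ : ℂ)) := hϑm
    cases ηp with
    | infty =>
      have hp : ϑp = -1 := hϑp
      exact master sm sp ϵ hs hϵ κ hκ ϑm ϑp hϑm0 hϑp0
        (fun hc => theta_ne_neg_one _ g ϑm hr0 hm.1 hm.2 hc.1)
        (fun Y Y' => Y' = Complex.I * κ * g * Y) (fun Y Y' => Y = 0)
        (fun Y Y' => bc_coe _ κ hκ hr0 ϑm g hm.1 hm.2 Y Y')
        (fun Y Y' => bc_infty _ κ hκ hr0 ϑp hp Y Y')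
    | coe h =>
      have hp : h ≠ -(Real.sqrt ϵ : ℂ) ∧
          ϑp = (1 - h / (Real.sqrt ϵ : ℂ)) / (1 + h / (Real.sqrt ϵ : ℂ)) := hϑp
      exact master sm sp ϵ hs hϵ κ hκ ϑm ϑp hϑm0 hϑp0
        (fun hc => theta_ne_neg_one _ h ϑp hr0 hp.1 hp.2 hc.2)
        (fun Y Y' => Y' = Complex.I * κ * g * Y) (fun Y Y' => Y' = Complex.I * κ * h * Y)
        (fun Y Y' => bc_coe _ κ hκ hr0 ϑm g hm.1 hm.2 Y Y')
        (fun Y Y' => bc_coe _ κ hκ hr0 ϑp h hp.1 hp.2 Y Y')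
end

section
/- Explicit odd-mode resonance of a single half-wave layer: let 0 < n₁ ≤ n_∞ < n₂, s₊ > 0, and define ε₀(s) = n₂² for |s| ≤ s₊ and ε₀(s) = n_∞² for |s| > s₊. Then κ₀ = -(i/(2 s₊ n₂)) Log( (n₂ + n_∞)/(n₂ - n_∞) ) + π/(2 s₊ n₂) is a resonance of ε₀ with an odd mode; explicitly, the function y(s) = sin(n₂ κ₀ s) on [-s₊, s₊], extended outgoing outside, is an odd nontrivial solution of y'' = -κ₀² ε₀ y satisfying y'(s₊) = i n_∞ κ₀ y(s₊). -/
/-- Explicit odd-mode resonance of a single half-wave layer. With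
`0 < n₁ ≤ n_∞ < n₂`, `s₊ > 0`, `ε₀ = n₂²` on `[-s₊,s₊]` and `= n_∞²` outside, the number
`κ₀ = -(i/(2 s₊ n₂)) Log((n₂+n_∞)/(n₂-n_∞)) + π/(2 s₊ n₂)` is a resonance with odd mode
`y(s) = sin(n₂ κ₀ s)`: `y` is odd, nontrivial, solves `y'' = -κ₀² ε₀ y` on `[-s₊,s₊]`,
and satisfies the outgoing condition `y'(s₊) = i n_∞ κ₀ y(s₊)`. -/
theorem stmt17 (n₁ ninf n₂ sp : ℝ)
    (hn₁ : 0 < n₁) (h1i : n₁ ≤ ninf) (hi2 : ninf < n₂) (hsp : 0 < sp)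
    (ε₀ : ℝ → ℝ)
    (hε₀ : ∀ s : ℝ, (|s| ≤ sp → ε₀ s = n₂ ^ 2) ∧ (sp < |s| → ε₀ s = ninf ^ 2))
    (κ₀ : ℂ)
    (hκ₀ : κ₀ = -(Complex.I / (2 * (sp : ℂ) * (n₂ : ℂ))) *
        (Real.log ((n₂ + ninf) / (n₂ - ninf)) : ℂ)
        + (Real.pi : ℂ) / (2 * (sp : ℂ) * (n₂ : ℂ))) :
    (∀ s : ℝ, Complex.sin ((n₂ : ℂ) * κ₀ * ((-s : ℝ) : ℂ)) =
        -Complex.sin ((n₂ : ℂ) * κ₀ * (s : ℂ))) ∧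
    (∃ s : ℝ, Complex.sin ((n₂ : ℂ) * κ₀ * (s : ℂ)) ≠ 0) ∧
    (∀ s : ℝ, HasDerivAt (fun u : ℝ => Complex.sin ((n₂ : ℂ) * κ₀ * (u : ℂ)))
        ((n₂ : ℂ) * κ₀ * Complex.cos ((n₂ : ℂ) * κ₀ * (s : ℂ))) s) ∧
    (∀ s ∈ Set.Icc (-sp) sp,
        HasDerivAt (fun u : ℝ => (n₂ : ℂ) * κ₀ * Complex.cos ((n₂ : ℂ) * κ₀ * (u : ℂ)))
          (-(κ₀ ^ 2 * (ε₀ s : ℂ) * Complex.sin ((n₂ : ℂ) * κ₀ * (s : ℂ)))) s) ∧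
    ((n₂ : ℂ) * κ₀ * Complex.cos ((n₂ : ℂ) * κ₀ * (sp : ℂ)) =
        Complex.I * (ninf : ℂ) * κ₀ * Complex.sin ((n₂ : ℂ) * κ₀ * (sp : ℂ))) := by
  have hn₂ : (0:ℝ) < n₂ := lt_of_le_of_lt (le_of_lt (lt_of_lt_of_le hn₁ h1i)) hi2
  have hninf : (0:ℝ) < ninf := lt_of_lt_of_le hn₁ h1i
  have hsub : (0:ℝ) < n₂ - ninf := sub_pos.mpr hi2
  have hn₂C : (n₂ : ℂ) ≠ 0 := Complex.ofReal_ne_zero.mpr (ne_of_gt hn₂)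
  have hspC : (sp : ℂ) ≠ 0 := Complex.ofReal_ne_zero.mpr (ne_of_gt hsp)
  set L : ℝ := Real.log ((n₂ + ninf) / (n₂ - ninf)) with hL
  -- key identity: n₂ κ₀ sp = π/2 - I * (L/2)
  have hz : (n₂ : ℂ) * κ₀ * (sp : ℂ) = (Real.pi : ℂ) / 2 - Complex.I * ((L : ℂ) / 2) := by
    rw [hκ₀]; field_simp; ring
  -- derivative lemma
  have hderiv : ∀ (c : ℂ) (s : ℝ),
      HasDerivAt (fun u : ℝ => Complex.sin (c * (u : ℂ))) (c * Complex.cos (c * (s : ℂ))) s := by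
    intro c s
    have h1 : HasDerivAt (fun z : ℂ => Complex.sin (c * z)) (c * Complex.cos (c * (s : ℂ))) (s : ℂ) := by
      have := (Complex.hasDerivAt_sin (c * (s : ℂ))).comp (s : ℂ)
        ((hasDerivAt_id (s : ℂ)).const_mul c)
      exact this.congr_deriv (by simp [mul_comm])
    exact h1.comp_ofReal
  have hderiv2 : ∀ (c : ℂ) (s : ℝ),
      HasDerivAt (fun u : ℝ => Complex.cos (c * (u : ℂ))) (-(c * Complex.sin (c * (s : ℂ)))) s := by
    intro c s
    have h1 : HasDerivAt (fun z : ℂ => Complex.cos (c * z)) (-(c * Complex.sin (c * (s : ℂ)))) (s : ℂ) := by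
      have := (Complex.hasDerivAt_cos (c * (s : ℂ))).comp (s : ℂ)
        ((hasDerivAt_id (s : ℂ)).const_mul c)
      exact this.congr_deriv (by simp [mul_comm])
    exact h1.comp_ofReal
  refine ⟨?_, ?_, ?_, ?_, ?_⟩
  · intro s
    push_cast
    rw [mul_neg, Complex.sin_neg]
  · refine ⟨sp, ?_⟩
    rw [hz, Complex.sin_pi_div_two_sub, mul_comm Complex.I, Complex.cos_mul_I,
      show ((L : ℂ) / 2) = ((L / 2 : ℝ) : ℂ) by push_cast; ring, ← Complex.ofReal_cosh]
    exact_mod_cast ne_of_gt (Real.cosh_pos (x := L / 2))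
  · intro s; exact hderiv _ s
  · intro s hs
    have hεs : ε₀ s = n₂ ^ 2 := (hε₀ s).1 (abs_le.mpr ⟨hs.1, hs.2⟩)
    have := ((hderiv2 ((n₂ : ℂ) * κ₀) s).const_mul ((n₂ : ℂ) * κ₀))
    refine this.congr_deriv ?_
    rw [hεs]
    push_cast
    ring
  · rw [hz, Complex.sin_pi_div_two_sub, Complex.cos_pi_div_two_sub,
      mul_comm Complex.I, Complex.cos_mul_I, Complex.sin_mul_I,
      show ((L : ℂ) / 2) = ((L / 2 : ℝ) : ℂ) by push_cast; ring,
      ← Complex.ofReal_cosh, ← Complex.ofReal_sinh]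
    -- reduces to n₂ * sinh(L/2) = ninf * cosh(L/2)
    have hkey : n₂ * Real.sinh (L / 2) = ninf * Real.cosh (L / 2) := by
      have hapos : (0:ℝ) < Real.exp (L / 2) := Real.exp_pos _
      have h2 : Real.exp (L / 2) * Real.exp (L / 2) = (n₂ + ninf) / (n₂ - ninf) := by
        rw [← Real.exp_add, show L / 2 + L / 2 = L by ring, hL,
          Real.exp_log (div_pos (by linarith) hsub)]
      have h3 : Real.exp (L / 2) * Real.exp (L / 2) * (n₂ - ninf) = n₂ + ninf := by
        rw [h2]; field_simp
      rw [Real.sinh_eq, Real.cosh_eq, Real.exp_neg]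
      field_simp
      nlinarith [h3]
    have hkeyC : (n₂ : ℂ) * (Real.sinh (L / 2) : ℂ) = (ninf : ℂ) * (Real.cosh (L / 2) : ℂ) := by
      exact_mod_cast hkey
    calc (n₂ : ℂ) * κ₀ * ((Real.sinh (L/2) : ℂ) * Complex.I)
        = Complex.I * κ₀ * ((n₂:ℂ) * (Real.sinh (L/2) : ℂ)) := by ring
      _ = Complex.I * κ₀ * ((ninf:ℂ) * (Real.cosh (L/2) : ℂ)) := by rw [hkeyC]
      _ = Complex.I * (ninf : ℂ) * κ₀ * (Real.cosh (L/2) : ℂ) := by ring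
end

section
/- No-return half-plane: let Arg κ ∈ (-π/2, 0), ε measurable with n₁² ≤ ε ≤ n₂², y a nontrivial solution of y'' = -κ² ε y, and x = y'/(iκ y). Fix τ ∈ [0, -2 Arg κ]. If at some s₀ the point x(s₀) lies in the closed half-plane H⁺_τ = closure of i e^{-i(τ + Arg κ)} ℂ₋ (where ℂ₋ = {Im z < 0}), then x(s) lies in the open half-plane i e^{-i(τ + Arg κ)} ℂ₋ for all s > s₀ in the interval of definition (at points where y(s) ≠ 0). -/
open Complex Set

/-- Key algebraic identity relating the half-plane functional to
`G(s) = Re(-i e^{iτ} conj(y) y')`. -/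
lemma stmt19_key (κ w u : ℂ) (hw : w ≠ 0) (hκ : κ ≠ 0) (τ : ℝ) :
    Complex.exp (Complex.I * ((τ:ℂ) + (κ.arg:ℂ))) * (u / (Complex.I * κ * w)) =
      ((‖κ‖ * Complex.normSq w)⁻¹ : ℝ) •
        ((-Complex.I * Complex.exp (Complex.I * (τ:ℂ))) * (starRingEnd ℂ) w * u) := by
  have hr0 : (0:ℝ) < ‖κ‖ := norm_pos_iff.mpr hκ
  have hns : (0:ℝ) < Complex.normSq w := normSq_pos.mpr hw
  set e : ℂ := Complex.exp (I * (τ:ℂ)) with he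
  set f : ℂ := Complex.exp ((κ.arg:ℂ) * I) with hf
  set N : ℝ := Complex.normSq w with hN
  have hκ' : κ = (‖κ‖ : ℂ) * f := (Complex.norm_mul_exp_arg_mul_I κ).symm
  have hexp : Complex.exp (I * ((τ:ℂ) + (κ.arg:ℂ))) = e * f := by
    rw [he, hf, ← Complex.exp_add]; ring_nf
  have hmulconj : (starRingEnd ℂ) w * w = (N : ℂ) := by
    rw [mul_comm, Complex.mul_conj]
  rw [Complex.real_smul, ← mul_div_assoc, div_eq_iff (by simp [hw, hκ, Complex.I_ne_zero])]
  push_cast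
  rw [hexp]
  nth_rewrite 2 [hκ']
  field_simp
  rw [neg_div', eq_div_iff (mul_ne_zero (by exact_mod_cast hr0.ne') (by exact_mod_cast hns.ne'))]
  linear_combination (I^2 * e * (‖κ‖ : ℂ) * f * u) * hmulconj +
    (e*f*u*(‖κ‖:ℂ)*(N:ℂ)) * Complex.I_sq

lemma stmt19_re_a (τ : ℝ) :
    (-Complex.I * Complex.exp (Complex.I * (τ:ℂ))).re = Real.sin τ := by
  rw [mul_comm Complex.I, Complex.exp_mul_I]
  simp [Complex.mul_re, Complex.sin_ofReal_re, Complex.cos_ofReal_im]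

lemma stmt19_re_b (τ : ℝ) (κ : ℂ) :
    (-((-Complex.I * Complex.exp (Complex.I * (τ:ℂ))) * κ^2)).re
      = (‖κ‖)^2 * (-Real.sin (τ + 2 * κ.arg)) := by
  have hκ' : κ = (‖κ‖ : ℂ) * Complex.exp ((κ.arg:ℂ) * I) :=
    (Complex.norm_mul_exp_arg_mul_I κ).symm
  have hee : Complex.exp (I * (τ:ℂ)) * Complex.exp ((κ.arg:ℂ) * I) ^ 2
      = Complex.exp (((τ + 2*κ.arg : ℝ):ℂ) * I) := by
    rw [sq, ← Complex.exp_add, ← Complex.exp_add]; congr 1; push_cast; ring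
  have this1 : -((-I * Complex.exp (I * (τ:ℂ))) * κ^2)
      = (‖κ‖:ℂ)^2 * (I * Complex.exp (((τ + 2*κ.arg : ℝ):ℂ) * I)) := by
    nth_rewrite 1 [hκ']
    rw [mul_pow]
    linear_combination ((‖κ‖:ℂ)^2 * I) * hee
  rw [this1, Complex.exp_mul_I, ← Complex.ofReal_cos, ← Complex.ofReal_sin]
  have h2 : ((‖κ‖:ℂ))^2 *
        (I * ((Real.cos (τ + 2*κ.arg) : ℂ) + (Real.sin (τ + 2*κ.arg):ℂ) * I))
      = ((-( (‖κ‖)^2 * Real.sin (τ + 2*κ.arg)) : ℝ) : ℂ)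
        + (((‖κ‖)^2 * Real.cos (τ + 2*κ.arg) : ℝ):ℂ) * I := by
    push_cast; ring_nf; rw [Complex.I_sq]; ring
  rw [h2]
  simp only [Complex.add_re, Complex.mul_re, Complex.ofReal_re, Complex.ofReal_im,
    Complex.I_re, Complex.I_im]
  ring

/-- A nontrivial solution of the second-order linear ODE never has `y` and `y'`
simultaneously zero (Grönwall/uniqueness). -/
lemma stmt19_never_both_zero (sm sp n₁ n₂ : ℝ) (hsmle : sm ≤ sp) (hn₁ : 0 < n₁)
    (ε : ℝ → ℝ) (hε : ∀ s ∈ Set.Icc sm sp, n₁ ^ 2 ≤ ε s ∧ ε s ≤ n₂ ^ 2)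
    (κ : ℂ)
    (y y' : ℝ → ℂ)
    (hy : ∀ s ∈ Set.Icc sm sp, HasDerivAt y (y' s) s)
    (hy' : ∀ s ∈ Set.Icc sm sp, HasDerivAt y' (-(κ ^ 2 * (ε s : ℂ) * y s)) s)
    (hnt : ∃ s ∈ Set.Icc sm sp, y s ≠ 0) :
    ∀ u ∈ Set.Icc sm sp, ¬(y u = 0 ∧ y' u = 0) := by
  intro u hu ⟨h1, h2⟩
  set εc : ℝ → ℝ := fun t => ε (min sp (max sm t)) with hεc
  have hmem : ∀ t : ℝ, min sp (max sm t) ∈ Icc sm sp := fun t =>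
    ⟨le_min hsmle (le_max_left _ _), min_le_left _ _⟩
  have hεcb : ∀ t, n₁^2 ≤ εc t ∧ εc t ≤ n₂^2 := fun t => hε _ (hmem t)
  have hεceq : ∀ t ∈ Icc sm sp, εc t = ε t := by
    intro t ht
    simp only [hεc]
    rw [max_eq_right ht.1, min_eq_right ht.2]
  set v : ℝ → ℂ × ℂ → ℂ × ℂ := fun t p => (p.2, -(κ^2 * (εc t : ℂ)) * p.1) with hv
  set C : ℝ := ‖κ‖ ^ 2 * n₂ ^ 2 with hC
  set K : NNReal := Real.toNNReal (max 1 C) with hK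
  have hKc : (K : ℝ) = max 1 C := Real.coe_toNNReal _ (le_trans zero_le_one (le_max_left _ _))
  have hlip : ∀ t, LipschitzOnWith K (v t) (Set.univ : Set (ℂ × ℂ)) := by
    intro t
    apply LipschitzWith.lipschitzOnWith
    apply LipschitzWith.of_dist_le_mul
    intro p q
    have habs : ‖-(κ^2 * (εc t : ℂ))‖ ≤ C := by
      rw [norm_neg, norm_mul, norm_pow]
      have h1 : ‖((εc t : ℂ))‖ = |εc t| := by rw [Complex.norm_real, Real.norm_eq_abs]
      have h2 : |εc t| ≤ n₂^2 := by
        rw [abs_le]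
        constructor
        · nlinarith [(hεcb t).1, (hεcb t).2]
        · exact (hεcb t).2
      rw [h1, hC]
      have : (0:ℝ) ≤ ‖κ‖ ^ 2 := by positivity
      nlinarith
    have hd1 : dist (-(κ^2 * (εc t : ℂ)) * p.1) (-(κ^2 * (εc t : ℂ)) * q.1)
        = ‖-(κ^2 * (εc t : ℂ))‖ * dist p.1 q.1 := by
      rw [Complex.dist_eq, Complex.dist_eq, ← mul_sub, norm_mul]
    rw [Prod.dist_eq, Prod.dist_eq, hKc]
    simp only [hv]
    apply max_le
    · have := le_max_right (dist p.1 q.1) (dist p.2 q.2)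
      have h1 : (1:ℝ) ≤ max 1 C := le_max_left _ _
      nlinarith [dist_nonneg (x := p.2) (y := q.2), dist_nonneg (x := p.1) (y := q.1)]
    · rw [hd1]
      have hCle : C ≤ max 1 C := le_max_right _ _
      have := le_max_left (dist p.1 q.1) (dist p.2 q.2)
      have h0C : 0 ≤ ‖-(κ^2 * (εc t : ℂ))‖ := (norm_nonneg _)
      nlinarith [dist_nonneg (x := p.1) (y := q.1), dist_nonneg (x := p.2) (y := q.2)]
  set f : ℝ → ℂ × ℂ := fun t => (y t, y' t) with hf
  have hfd : ∀ t ∈ Icc sm sp, HasDerivAt f (v t (f t)) t := by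
    intro t ht
    have h := (hy t ht).prodMk (hy' t ht)
    have : v t (f t) = (y' t, -(κ ^ 2 * (ε t : ℂ) * y t)) := by
      simp only [hv, hf, hεceq t ht]
      ring_nf
    rw [this]
    exact h
  have hfc : ContinuousOn f (Icc sm sp) := fun t ht =>
    ((hy t ht).prodMk (hy' t ht)).continuousAt.continuousWithinAt
  have hgd : ∀ t, HasDerivAt (fun _ : ℝ => ((0:ℂ),(0:ℂ))) (v t ((0:ℂ),(0:ℂ))) t := by
    intro t
    have : v t ((0:ℂ),(0:ℂ)) = ((0:ℂ),(0:ℂ)) := by simp [hv]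
    rw [this]
    exact hasDerivAt_const _ _
  have hfu : f u = ((0:ℂ),(0:ℂ)) := by simp [hf, h1, h2]
  have hright : EqOn f (fun _ => ((0:ℂ),(0:ℂ))) (Icc u sp) := by
    apply ODE_solution_unique_of_mem_Icc_right (fun t _ => hlip t)
      (hfc.mono (Icc_subset_Icc_left hu.1))
      (fun t ht => (hfd t ⟨le_trans hu.1 ht.1, le_of_lt ht.2⟩).hasDerivWithinAt)
      (fun _ _ => trivial) continuousOn_const
      (fun t _ => (hgd t).hasDerivWithinAt) (fun _ _ => trivial) hfu
  have hleft : EqOn f (fun _ => ((0:ℂ),(0:ℂ))) (Icc sm u) := by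
    apply ODE_solution_unique_of_mem_Icc_left (fun t _ => hlip t)
      (hfc.mono (Icc_subset_Icc_right hu.2))
      (fun t ht => (hfd t ⟨le_of_lt ht.1, le_trans ht.2 hu.2⟩).hasDerivWithinAt)
      (fun _ _ => trivial) continuousOn_const
      (fun t _ => (hgd t).hasDerivWithinAt) (fun _ _ => trivial) hfu
  obtain ⟨sb, hsb, hysb⟩ := hnt
  rcases le_total sb u with h | h
  · have := hleft ⟨hsb.1, h⟩
    apply hysb
    simpa [hf, Prod.ext_iff] using congrArg Prod.fst this
  · have := hright ⟨h, hsb.2⟩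
    apply hysb
    simpa [hf, Prod.ext_iff] using congrArg Prod.fst this

/-- No-return half-plane. With `Arg κ ∈ (-π/2,0)`, `τ ∈ [0, -2 Arg κ]`,
`y` a nontrivial solution of `y'' = -κ² ε y` (`n₁² ≤ ε ≤ n₂²`) and `x = y'/(iκ y)`:
if at some `s₀` (where `y(s₀) ≠ 0`) the point `x(s₀)` lies in the closed half-plane
`{Re(e^{i(τ + Arg κ)} z) ≥ 0}` (the closure of `i e^{-i(τ+Arg κ)} ℂ₋`), then for all
later `s` in the interval with `y(s) ≠ 0`, `x(s)` lies in the open half-plane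
`{Re(e^{i(τ + Arg κ)} z) > 0}`. -/
theorem stmt19 (sm sp n₁ n₂ : ℝ) (hsm : sm < sp) (hn₁ : 0 < n₁) (hn12 : n₁ < n₂)
    (ε : ℝ → ℝ) (hε : ∀ s ∈ Set.Icc sm sp, n₁ ^ 2 ≤ ε s ∧ ε s ≤ n₂ ^ 2)
    (κ : ℂ) (hκarg : κ.arg ∈ Set.Ioo (-(Real.pi / 2)) 0)
    (τ : ℝ) (hτ : τ ∈ Set.Icc 0 (-2 * κ.arg))
    (y y' : ℝ → ℂ)
    (hy : ∀ s ∈ Set.Icc sm sp, HasDerivAt y (y' s) s)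
    (hy' : ∀ s ∈ Set.Icc sm sp, HasDerivAt y' (-(κ ^ 2 * (ε s : ℂ) * y s)) s)
    (hnt : ∃ s ∈ Set.Icc sm sp, y s ≠ 0)
    (s₀ : ℝ) (hs₀ : s₀ ∈ Set.Icc sm sp) (hy₀ : y s₀ ≠ 0)
    (hstart : 0 ≤ (Complex.exp (Complex.I * ((τ : ℂ) + (κ.arg : ℂ))) *
        (y' s₀ / (Complex.I * κ * y s₀))).re) :
    ∀ s ∈ Set.Icc sm sp, s₀ < s → y s ≠ 0 →
      0 < (Complex.exp (Complex.I * ((τ : ℂ) + (κ.arg : ℂ))) *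
        (y' s / (Complex.I * κ * y s))).re := by
  intro s₁ hs₁ hs01 hys₁
  obtain ⟨hτ0, hτ2⟩ := hτ
  obtain ⟨hargl, hargu⟩ := hκarg
  have hπ : 0 < Real.pi := Real.pi_pos
  have hκ0 : κ ≠ 0 := by
    intro h
    rw [h, Complex.arg_zero] at hargu
    exact lt_irrefl 0 hargu
  set φ : ℝ := κ.arg with hφ
  set c₀ : ℂ := -Complex.I * Complex.exp (Complex.I * (τ:ℂ)) with hc₀
  set A : ℝ := ‖κ‖ with hA
  have hA0 : 0 < A := norm_pos_iff.mpr hκ0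
  set a : ℝ := Real.sin τ with ha
  set b : ℝ := A^2 * (-Real.sin (τ + 2*φ)) with hb
  have hare : c₀.re = a := stmt19_re_a τ
  have hbre : (-(c₀ * κ^2)).re = b := stmt19_re_b τ κ
  have hτub : τ < Real.pi := by
    have : -2*φ < Real.pi := by rw [hφ]; linarith
    linarith
  have ha0 : 0 ≤ a := Real.sin_nonneg_of_nonneg_of_le_pi hτ0 hτub.le
  have hb0 : 0 ≤ b := by
    have h1 : Real.sin (τ + 2*φ) ≤ 0 :=
      Real.sin_nonpos_of_nonpos_of_neg_pi_le (by linarith) (by linarith)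
    have : (0:ℝ) ≤ A^2 := by positivity
    nlinarith
  have hab : 0 < a ∨ 0 < b := by
    rcases eq_or_lt_of_le hτ0 with h | h
    · right
      have h1 : Real.sin (τ + 2*φ) < 0 :=
        Real.sin_neg_of_neg_of_neg_pi_lt (by linarith) (by linarith)
      have : (0:ℝ) < A^2 := by positivity
      nlinarith
    · exact Or.inl (Real.sin_pos_of_pos_of_lt_pi h hτub)
  -- the Lyapunov-type function and its derivative
  set G : ℝ → ℝ := fun s => (c₀ * (starRingEnd ℂ) (y s) * y' s).re with hG
  set d : ℝ → ℝ := fun s =>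
    a * Complex.normSq (y' s) + ε s * b * Complex.normSq (y s) with hd
  have hGd : ∀ s ∈ Icc sm sp, HasDerivAt G (d s) s := by
    intro s hs
    have h1 : HasDerivAt (fun t => c₀ * (starRingEnd ℂ) (y t))
        (c₀ * (starRingEnd ℂ) (y' s)) s := (hy s hs).star.const_mul c₀
    have h2 := h1.mul (hy' s hs)
    have h3 : HasDerivAt (⇑Complex.reCLM ∘ _) _ s := Complex.reCLM.hasFDerivAt.comp_hasDerivAt s h2
    convert h3 using 1
    · rfl
    have hc1 : (starRingEnd ℂ) (y' s) * y' s = ((Complex.normSq (y' s) : ℝ) : ℂ) := by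
      rw [mul_comm, Complex.mul_conj]
    have hc2 : (starRingEnd ℂ) (y s) * y s = ((Complex.normSq (y s) : ℝ) : ℂ) := by
      rw [mul_comm, Complex.mul_conj]
    have e1 : c₀ * (starRingEnd ℂ) (y' s) * y' s
        = c₀ * ((Complex.normSq (y' s) : ℝ) : ℂ) := by rw [mul_assoc, hc1]
    have e2 : c₀ * (starRingEnd ℂ) (y s) * (-(κ ^ 2 * ((ε s : ℝ):ℂ) * y s))
        = (-(c₀ * κ^2)) * ((ε s : ℝ):ℂ) * ((Complex.normSq (y s) : ℝ) : ℂ) := by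
      linear_combination (-(c₀ * κ^2 * ((ε s : ℝ):ℂ))) * hc2
    simp only [Complex.reCLM_apply, e1, e2, Complex.add_re]
    simp only [hd]
    rw [show (c₀ * ((Complex.normSq (y' s) : ℝ) : ℂ)).re = c₀.re * Complex.normSq (y' s) by
      simp [Complex.mul_re]]
    rw [show ((-(c₀ * κ^2)) * ((ε s : ℝ):ℂ) * ((Complex.normSq (y s) : ℝ) : ℂ)).re
        = (-(c₀ * κ^2)).re * ε s * Complex.normSq (y s) by
      simp [Complex.mul_re, Complex.mul_im]; ring]
    rw [hare, hbre]
    ring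
  have hGc : ContinuousOn G (Icc sm sp) := fun t ht =>
    (hGd t ht).continuousAt.continuousWithinAt
  have hderiv : ∀ x ∈ Icc sm sp, deriv G x = d x := fun x hx => (hGd x hx).deriv
  -- never both zero
  have hnever := stmt19_never_both_zero sm sp n₁ n₂ hsm.le hn₁ ε hε κ y y' hy hy' hnt
  -- lower bound for the derivative
  set h₀ : ℝ → ℝ := fun s =>
    a * Complex.normSq (y' s) + b * n₁^2 * Complex.normSq (y s) with hh₀
  have hh₀d : ∀ s ∈ Icc sm sp, h₀ s ≤ d s := by
    intro s hs
    simp only [hh₀, hd]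
    have h1 := (hε s hs).1
    have h2 := Complex.normSq_nonneg (y s)
    nlinarith [mul_nonneg (mul_nonneg (sub_nonneg.mpr h1) hb0) h2]
  have hh₀0 : ∀ s, 0 ≤ h₀ s := by
    intro s
    have h2 := Complex.normSq_nonneg (y s)
    have h3 := Complex.normSq_nonneg (y' s)
    have h4 : (0:ℝ) ≤ n₁^2 := by positivity
    simp only [hh₀]
    nlinarith [mul_nonneg ha0 h3, mul_nonneg (mul_nonneg hb0 h4) h2]
  have hd0 : ∀ s ∈ Icc sm sp, 0 ≤ d s := fun s hs => le_trans (hh₀0 s) (hh₀d s hs)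
  have hIoosub : Ioo s₀ s₁ ⊆ Icc sm sp := fun x hx =>
    ⟨le_trans hs₀.1 hx.1.le, le_trans hx.2.le hs₁.2⟩
  -- monotonicity on [s₀, s₁]
  have hIccsub : Icc s₀ s₁ ⊆ Icc sm sp := fun x hx =>
    ⟨le_trans hs₀.1 hx.1, le_trans hx.2 hs₁.2⟩
  have hmono : MonotoneOn G (Icc s₀ s₁) := by
    apply monotoneOn_of_deriv_nonneg (convex_Icc _ _) (hGc.mono hIccsub)
    · intro x hx
      rw [interior_Icc] at hx
      exact (hGd x (hIoosub hx)).differentiableAt.differentiableWithinAt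
    · intro x hx
      rw [interior_Icc] at hx
      rw [hderiv x (hIoosub hx)]
      exact hd0 x (hIoosub hx)
  -- find a point where h₀ is positive
  have hexv : ∃ v ∈ Ioo s₀ s₁, 0 < h₀ v := by
    by_contra hcon
    push_neg at hcon
    obtain ⟨u, huI⟩ : ∃ u, u ∈ Ioo s₀ s₁ :=
      ⟨(s₀ + s₁)/2, by constructor <;> [linarith; linarith]⟩
    have huIcc : u ∈ Icc sm sp := hIoosub huI
    have hnbhd : Ioo s₀ s₁ ∈ nhds u := isOpen_Ioo.mem_nhds huI
    rcases hab with hA' | hB'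
    · -- 0 < a : then y' vanishes on all of Ioo s₀ s₁
      have hzero : ∀ v ∈ Ioo s₀ s₁, y' v = 0 := by
        intro v hv
        have h1 := hcon v hv
        have h2 := Complex.normSq_nonneg (y v)
        have h3 := Complex.normSq_nonneg (y' v)
        have h4 : (0:ℝ) ≤ b * n₁^2 := mul_nonneg hb0 (by positivity)
        have : Complex.normSq (y' v) = 0 := by
          simp only [hh₀] at h1
          have h5 : a * Complex.normSq (y' v) ≤ 0 := by
            have := mul_nonneg h4 h2
            linarith
          have h6 : a * Complex.normSq (y' v) = 0 :=
            le_antisymm h5 (mul_nonneg ha0 h3)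
          exact (mul_eq_zero.mp h6).resolve_left hA'.ne'
        exact Complex.normSq_eq_zero.mp this
      have heq : y' =ᶠ[nhds u] (fun _ => (0:ℂ)) :=
        Filter.eventually_of_mem hnbhd (fun x hx => hzero x hx)
      have hder0 : HasDerivAt y' 0 u :=
        (hasDerivAt_const u (0:ℂ)).congr_of_eventuallyEq heq
      have huniq : -(κ ^ 2 * (ε u : ℂ) * y u) = 0 := (hy' u huIcc).unique hder0
      have hεu : (ε u : ℂ) ≠ 0 := by
        have hh := (hε u huIcc).1
        have hp : (0:ℝ) < n₁^2 := pow_pos hn₁ 2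
        have : (0:ℝ) < ε u := lt_of_lt_of_le hp hh
        exact_mod_cast this.ne'
      have hyu : y u = 0 := by
        have hκ2 : κ^2 ≠ 0 := pow_ne_zero _ hκ0
        have h0 : κ ^ 2 * (ε u : ℂ) * y u = 0 := neg_eq_zero.mp huniq
        rcases mul_eq_zero.mp h0 with h | h
        · exact absurd h (mul_ne_zero hκ2 hεu)
        · exact h
      exact hnever u huIcc ⟨hyu, hzero u huI⟩
    · -- 0 < b : then y vanishes on all of Ioo s₀ s₁
      have hzero : ∀ v ∈ Ioo s₀ s₁, y v = 0 := by
        intro v hv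
        have h1 := hcon v hv
        have h2 := Complex.normSq_nonneg (y v)
        have h3 := Complex.normSq_nonneg (y' v)
        have h4 : (0:ℝ) < b * n₁^2 := mul_pos hB' (pow_pos hn₁ 2)
        have : Complex.normSq (y v) = 0 := by
          simp only [hh₀] at h1
          have h5 : b * n₁^2 * Complex.normSq (y v) ≤ 0 := by
            have := mul_nonneg ha0 h3
            linarith
          have h6 : b * n₁^2 * Complex.normSq (y v) = 0 :=
            le_antisymm h5 (mul_nonneg h4.le h2)
          exact (mul_eq_zero.mp h6).resolve_left h4.ne'
        exact Complex.normSq_eq_zero.mp this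
      have heq : y =ᶠ[nhds u] (fun _ => (0:ℂ)) :=
        Filter.eventually_of_mem hnbhd (fun x hx => hzero x hx)
      have hder0 : HasDerivAt y 0 u :=
        (hasDerivAt_const u (0:ℂ)).congr_of_eventuallyEq heq
      have hy'u : y' u = 0 := ((hy u huIcc).unique hder0)
      exact hnever u huIcc ⟨hzero u huI, hy'u⟩
  obtain ⟨v, hvI, hv0⟩ := hexv
  have hvIcc : v ∈ Icc sm sp := hIoosub hvI
  -- continuity of h₀ at v
  have hconth₀ : ContinuousAt h₀ v := by
    have hcy : ContinuousAt y v := (hy v hvIcc).continuousAt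
    have hcy' : ContinuousAt y' v := (hy' v hvIcc).continuousAt
    exact (((Complex.continuous_normSq.continuousAt.comp hcy').const_mul a).add
      ((Complex.continuous_normSq.continuousAt.comp hcy).const_mul (b * n₁^2)))
  have hev : ∀ᶠ x in nhds v, 0 < h₀ x ∧ x ∈ Ioo s₀ s₁ :=
    (hconth₀.eventually (eventually_gt_nhds hv0)).and
      (isOpen_Ioo.mem_nhds hvI |> Filter.eventually_of_mem <| fun x hx => hx)
  obtain ⟨δ, hδ0, hball⟩ := Metric.eventually_nhds_iff_ball.mp hev
  set δ' : ℝ := δ/2 with hδ'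
  have hδ'0 : 0 < δ' := by simp only [hδ']; linarith
  have hsubball : Icc (v - δ') (v + δ') ⊆ Metric.ball v δ := by
    intro x hx
    rw [Metric.mem_ball, Real.dist_eq, abs_sub_lt_iff]
    constructor <;> [skip; skip] <;>
      · simp only [hδ'] at hx
        obtain ⟨hx1, hx2⟩ := hx
        linarith
  have hsub1 : Icc (v - δ') (v + δ') ⊆ Ioo s₀ s₁ := fun x hx => (hball x (hsubball hx)).2
  have hsub2 : Icc (v - δ') (v + δ') ⊆ Icc sm sp := fun x hx => hIoosub (hsub1 hx)
  have hstrict : StrictMonoOn G (Icc (v - δ') (v + δ')) := by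
    apply strictMonoOn_of_deriv_pos (convex_Icc _ _) (hGc.mono hsub2)
    intro x hx
    rw [interior_Icc] at hx
    have hx' : x ∈ Icc (v - δ') (v + δ') := Ioo_subset_Icc_self hx
    rw [hderiv x (hsub2 hx')]
    exact lt_of_lt_of_le (hball x (hsubball hx')).1 (hh₀d x (hsub2 hx'))
  -- G s₀ ≥ 0 from hstart
  have hkey₀ := stmt19_key κ (y s₀) (y' s₀) hy₀ hκ0 τ
  have hkey₁ := stmt19_key κ (y s₁) (y' s₁) hys₁ hκ0 τ
  have hGs₀ : 0 ≤ G s₀ := by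
    rw [hkey₀, Complex.real_smul] at hstart
    have hns₀ : (0:ℝ) < Complex.normSq (y s₀) := Complex.normSq_pos.mpr hy₀
    have hpos : (0:ℝ) < (‖κ‖ * Complex.normSq (y s₀))⁻¹ := by positivity
    have : ((((‖κ‖ * Complex.normSq (y s₀))⁻¹ : ℝ) : ℂ) *
        (c₀ * (starRingEnd ℂ) (y s₀) * y' s₀)).re
        = (‖κ‖ * Complex.normSq (y s₀))⁻¹ * G s₀ := by
      simp [hG, Complex.mul_re]
    rw [this] at hstart
    nlinarith
  -- chain of inequalities
  have hvm : v - δ' ∈ Icc (v - δ') (v + δ') := ⟨le_refl _, by linarith⟩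
  have hvp : v + δ' ∈ Icc (v - δ') (v + δ') := ⟨by linarith, le_refl _⟩
  have hvmIoo : v - δ' ∈ Ioo s₀ s₁ := hsub1 hvm
  have hvpIoo : v + δ' ∈ Ioo s₀ s₁ := hsub1 hvp
  have hstep1 : G s₀ ≤ G (v - δ') :=
    hmono ⟨le_refl _, hs01.le⟩ ⟨hvmIoo.1.le, hvmIoo.2.le⟩ hvmIoo.1.le
  have hstep2 : G (v - δ') < G (v + δ') := hstrict hvm hvp (by linarith)
  have hstep3 : G (v + δ') ≤ G s₁ :=
    hmono ⟨hvpIoo.1.le, hvpIoo.2.le⟩ ⟨hs01.le, le_refl _⟩ hvpIoo.2.le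
  have hGs₁ : 0 < G s₁ := by linarith
  -- conclude
  rw [hkey₁, Complex.real_smul]
  have hns₁ : (0:ℝ) < Complex.normSq (y s₁) := Complex.normSq_pos.mpr hys₁
  have hpos : (0:ℝ) < (‖κ‖ * Complex.normSq (y s₁))⁻¹ := by positivity
  have : ((((‖κ‖ * Complex.normSq (y s₁))⁻¹ : ℝ) : ℂ) *
      (c₀ * (starRingEnd ℂ) (y s₁) * y' s₁)).re
      = (‖κ‖ * Complex.normSq (y s₁))⁻¹ * G s₁ := by
    simp [hG, Complex.mul_re]
  rw [this]
  positivity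
end
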